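/- arXiv:1408.3009 — 4 statements merged into one kernel-verified Lean document; each statement's English description precedes it below -/
import Mathlib

section
/- Let K ⊆ Π, and let P ⊆ N ⊆ J ⊆ Π. Then the structure constants satisfy the identity a_{KNP} = Σ_{M ⊆ J} a_{KJM} · a^J_{MNP}. -/
open scoped Classical

noncomputable section

/-- The Weyl group of type `Aₙ`, realized as the symmetric group on `n+1` letters
permuting the coordinates of `ℝ^{n+1}`. -/
abbrev WA (n : ℕ) := Equiv.Perm (Fin (n + 1))

/-- The root `eᵢ - eⱼ` (with `i ≠ j`) of the root system `Φ` of type `Aₙ`,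
encoded as the ordered pair `(i, j)`. -/
abbrev RootA (n : ℕ) := Fin (n + 1) × Fin (n + 1)

/-- The natural action of `W(Aₙ)` on roots: `w (eᵢ - eⱼ) = e_{w i} - e_{w j}`. -/
def act (n : ℕ) (w : WA n) (p : RootA n) : RootA n := (w p.1, w p.2)

/-- Membership in the positive system `Φ⁺`: the root `eᵢ - eⱼ` is positive iff `i < j`. -/
def IsPos (n : ℕ) (p : RootA n) : Prop := p.1 < p.2

/-- The simple system `Π = {eᵢ - e_{i+1} : 1 ≤ i ≤ n}` of type `Aₙ`. -/
def PiA (n : ℕ) : Finset (RootA n) :=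
  (Finset.univ : Finset (Fin n)).image fun i => (Fin.castSucc i, Fin.succ i)

/-- The standard parabolic subgroup `W_J`, generated by the reflections `w_r`
(`= the transposition swapping the two coordinates of r`) for `r ∈ J`. -/
def WP (n : ℕ) (J : Finset (RootA n)) : Subgroup (WA n) :=
  Subgroup.closure ((fun p : RootA n => Equiv.swap p.1 p.2) '' (J : Set (RootA n)))

/-- `X_J = {w ∈ W : w(r) ∈ Φ⁺ for all r ∈ J}`, the set of distinguished (minimal length)
coset representatives of the cosets `w W_J`. -/
def XP (n : ℕ) (J : Finset (RootA n)) : Finset (WA n) :=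
  Finset.univ.filter fun w => ∀ r ∈ J, IsPos n (act n w r)

/-- `x_J = Σ_{d ∈ X_J} d` in the rational group algebra `ℚ[W]`. -/
def xA (n : ℕ) (J : Finset (RootA n)) : MonoidAlgebra ℚ (WA n) :=
  ∑ d ∈ XP n J, MonoidAlgebra.of ℚ (WA n) d

/-- `X_{JK} = X_J⁻¹ ∩ X_K`, the distinguished double coset representatives of
`W_J w W_K` in `W`. -/
def XD (n : ℕ) (J K : Finset (RootA n)) : Finset (WA n) :=
  Finset.univ.filter fun w => w⁻¹ ∈ XP n J ∧ w ∈ XP n K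

/-- The structure constant `a_{JKL} = #{w ∈ X_{JK} : w⁻¹(J) ∩ K = L}`. -/
def aC (n : ℕ) (J K L : Finset (RootA n)) : ℕ :=
  ((XD n J K).filter fun w => J.image (act n w⁻¹) ∩ K = L).card

/-- `X_K^J = X_K ∩ W_J` (for `K ⊆ J ⊆ Π`). -/
def XPrel (n : ℕ) (J K : Finset (RootA n)) : Finset (WA n) :=
  (XP n K).filter fun w => w ∈ WP n J

/-- `x_K^J = Σ_{d ∈ X_K ∩ W_J} d` in `ℚ[W]`. -/
def xArel (n : ℕ) (J K : Finset (RootA n)) : MonoidAlgebra ℚ (WA n) :=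
  ∑ d ∈ XPrel n J K, MonoidAlgebra.of ℚ (WA n) d

/-- The relative structure constant `a^J_{MNP} = #{w ∈ X_{MN} ∩ W_J : w⁻¹(M) ∩ N = P}`. -/
def aCrel (n : ℕ) (J M N P : Finset (RootA n)) : ℕ :=
  (((XD n M N).filter fun w => w ∈ WP n J).filter
    fun w => M.image (act n w⁻¹) ∩ N = P).card

/-- The equivalence relation `J ~ K ⟺ K = w(J) for some w ∈ W` on subsets of roots;
the equivalence class of `x_J` (resp. `x_K^J`) is indexed by the class `Quot.mk (EquivJ n) J`
(resp. `Quot.mk (EquivJ n) K`). -/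
def EquivJ (n : ℕ) (J K : Finset (RootA n)) : Prop :=
  ∃ w : WA n, K = J.image (act n w)

namespace SCAux

variable {n : ℕ}

lemma mem_XP {J : Finset (RootA n)} {w : WA n} :
    w ∈ XP n J ↔ ∀ r ∈ J, w r.1 < w r.2 := by
  simp [XP, IsPos, act]

lemma mem_PiA_iff {p : RootA n} : p ∈ PiA n ↔ p.2.1 = p.1.1 + 1 := by
  constructor
  · intro hp
    simp only [PiA, Finset.mem_image, Finset.mem_univ, true_and] at hp
    obtain ⟨i, hi⟩ := hp
    rw [← hi]
    simp
  · intro h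
    have h2 : p.2.1 ≤ n := Nat.lt_succ_iff.mp p.2.2
    simp only [PiA, Finset.mem_image, Finset.mem_univ, true_and]
    exact ⟨⟨p.1.1, by omega⟩, by
      apply Prod.ext <;> simp [Fin.ext_iff] <;> omega⟩

def StepJ (J : Finset (RootA n)) (g : ℕ) : Prop := ∃ p ∈ J, p.1.1 = g ∧ p.2.1 = g + 1

def SB (J : Finset (RootA n)) (i j : ℕ) : Prop :=
  ∀ k, (i ≤ k ∧ k < j) ∨ (j ≤ k ∧ k < i) → StepJ J k

lemma SB.rfl {J : Finset (RootA n)} {i : ℕ} : SB J i i := fun k hk => absurd hk (by omega)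

lemma SB.symm {J : Finset (RootA n)} {i j : ℕ} (h : SB J i j) : SB J j i :=
  fun k hk => h k hk.symm

lemma SB.trans {J : Finset (RootA n)} {i j l : ℕ} (h1 : SB J i j) (h2 : SB J j l) :
    SB J i l := fun k hk => by
  by_cases hc : (i ≤ k ∧ k < j) ∨ (j ≤ k ∧ k < i)
  · exact h1 k hc
  · exact h2 k (by omega)

def BSp (J : Finset (RootA n)) (σ : WA n) : Prop := ∀ i : Fin (n + 1), SB J i.1 (σ i).1

lemma BSp.one {J : Finset (RootA n)} : BSp J (1 : WA n) := fun _ => SB.rfl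

lemma BSp.mul {J : Finset (RootA n)} {σ τ : WA n} (hσ : BSp J σ) (hτ : BSp J τ) :
    BSp J (σ * τ) := fun i => (hτ i).trans (hσ (τ i))

lemma BSp.inv {J : Finset (RootA n)} {σ : WA n} (hσ : BSp J σ) : BSp J σ⁻¹ := fun i => by
  have h := hσ (σ⁻¹ i)
  rw [Equiv.Perm.inv_def, Equiv.apply_symm_apply] at h
  exact h.symm

lemma BSp.swap {J : Finset (RootA n)} (hJ : J ⊆ PiA n) {p : RootA n} (hp : p ∈ J) :
    BSp J (Equiv.swap p.1 p.2) := by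
  intro i
  have hadj : p.2.1 = p.1.1 + 1 := mem_PiA_iff.mp (hJ hp)
  by_cases h1 : i = p.1
  · rw [h1, Equiv.swap_apply_left]
    intro k hk
    exact ⟨p, hp, by omega, by omega⟩
  by_cases h2 : i = p.2
  · rw [h2, Equiv.swap_apply_right]
    intro k hk
    exact ⟨p, hp, by omega, by omega⟩
  · rw [Equiv.swap_apply_of_ne_of_ne h1 h2]
    exact SB.rfl

lemma wp_bsp {J : Finset (RootA n)} (hJ : J ⊆ PiA n) {σ : WA n} (hσ : σ ∈ WP n J) :
    BSp J σ := by
  induction hσ using Subgroup.closure_induction with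
  | mem x hx =>
    obtain ⟨p, hp, rfl⟩ := hx
    exact BSp.swap hJ hp
  | one => exact BSp.one
  | mul _ _ _ _ h1 h2 => exact h1.mul h2
  | inv _ _ h => exact h.inv


def InvF (σ : WA n) : Finset (Fin (n + 1) × Fin (n + 1)) :=
  Finset.univ.filter fun p => p.1 < p.2 ∧ σ p.2 < σ p.1

lemma swap_lt {a b x y : Fin (n + 1)} (hb : b.1 = a.1 + 1) (hxy : x < y)
    (hne : ¬(x = a ∧ y = b)) : Equiv.swap a b x < Equiv.swap a b y := by
  simp only [Equiv.swap_apply_def]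
  simp only [Fin.lt_def, Fin.ext_iff] at *
  split_ifs <;> simp_all [Fin.ext_iff] <;> omega

lemma invF_desc {σ : WA n} {a b : Fin (n + 1)} (hb : b.1 = a.1 + 1) (hd : σ b < σ a) :
    (InvF (σ * Equiv.swap a b)).card + 1 = (InvF σ).card := by
  have hab : a < b := by rw [Fin.lt_def]; omega
  have hmem : (a, b) ∈ InvF σ := by simp [InvF, hab, hd]
  have hss : ∀ x : Fin (n+1), Equiv.swap a b (Equiv.swap a b x) = x := fun x =>
    Equiv.swap_apply_self a b x
  have key : (InvF (σ * Equiv.swap a b)).card = ((InvF σ).erase (a, b)).card := by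
    apply Finset.card_nbij' (i := fun p => (Equiv.swap a b p.1, Equiv.swap a b p.2))
      (j := fun p => (Equiv.swap a b p.1, Equiv.swap a b p.2))
    · intro p hp
      replace hp : p ∈ InvF (σ * Equiv.swap a b) := hp
      rw [InvF, Finset.mem_filter] at hp
      simp only [Finset.mem_coe, InvF, Finset.mem_filter, Finset.mem_univ, true_and,
        Equiv.Perm.mul_apply] at hp
      obtain ⟨h1, h2⟩ := hp
      have hne : ¬(p.1 = a ∧ p.2 = b) := by
        rintro ⟨rfl, rfl⟩
        rw [Equiv.swap_apply_left, Equiv.swap_apply_right] at h2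
        exact absurd hd (not_lt.mpr h2.le)
      refine Finset.mem_erase.mpr ⟨?_, ?_⟩
      · intro hc
        rw [Prod.ext_iff] at hc
        obtain ⟨hc1, hc2⟩ := hc
        have e1 : p.1 = b := by
          have h := congrArg (Equiv.swap a b) hc1
          rwa [hss, Equiv.swap_apply_left] at h
        have e2 : p.2 = a := by
          have h := congrArg (Equiv.swap a b) hc2
          rwa [hss, Equiv.swap_apply_right] at h
        rw [e1, e2, Fin.lt_def] at h1
        omega
      · simp only [InvF, Finset.mem_filter, Finset.mem_univ, true_and]
        exact ⟨swap_lt hb h1 hne, h2⟩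
    · intro q hq
      rw [Finset.mem_coe, Finset.mem_erase] at hq
      obtain ⟨hqne, hq⟩ := hq
      simp only [Finset.mem_coe, InvF, Finset.mem_filter, Finset.mem_univ, true_and] at hq ⊢
      obtain ⟨h1, h2⟩ := hq
      have hne : ¬(q.1 = a ∧ q.2 = b) := by
        rintro ⟨h3, h4⟩
        exact hqne (Prod.ext h3 h4)
      exact ⟨swap_lt hb h1 hne, by simpa only [Equiv.Perm.mul_apply, hss] using h2⟩
    · intro p _; simp [hss]
    · intro q _; simp [hss]
  have hpos : 0 < (InvF σ).card := Finset.card_pos.mpr ⟨_, hmem⟩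
  rw [key, Finset.card_erase_of_mem hmem]
  omega

lemma strictMono_eq_one {σ : WA n} (h : StrictMono σ) : σ = 1 := by
  have key : ∀ (f : WA n), StrictMono f → ∀ m, ∀ x : Fin (n + 1), x.1 = m → x.1 ≤ (f x).1 := by
    intro f hf m
    induction m with
    | zero => intro x hx; omega
    | succ k ih =>
      intro x hx
      have hkn : k < n + 1 := by omega
      have hk : (⟨k, hkn⟩ : Fin (n + 1)) < x := by
        rw [Fin.lt_def]
        simp only [Fin.val_mk]
        omega
      have h1 := hf hk
      have h2 := ih ⟨k, hkn⟩ rfl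
      rw [Fin.lt_def] at h1
      have e1 : ((⟨k, hkn⟩ : Fin (n + 1)) : ℕ) = k := rfl
      omega
  have hinv : StrictMono (σ⁻¹ : WA n) := by
    intro x y hxy
    rcases lt_trichotomy (σ⁻¹ x) (σ⁻¹ y) with h' | h' | h'
    · exact h'
    · exact absurd (σ⁻¹.injective h') (ne_of_lt hxy)
    · have h2 := h h'
      simp only [Equiv.Perm.inv_def, Equiv.apply_symm_apply] at h2
      exact absurd hxy (asymm h2)
  apply Equiv.ext
  intro x
  show σ x = x
  have h1 : x.1 ≤ (σ x).1 := key σ h x.1 x rfl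
  have h2 : (σ x).1 ≤ (σ⁻¹ (σ x)).1 := key σ⁻¹ hinv (σ x).1 (σ x) rfl
  rw [Equiv.Perm.inv_def, Equiv.symm_apply_apply] at h2
  exact Fin.ext (le_antisymm h2 h1)

lemma exists_desc {σ : WA n} (hσ : σ ≠ 1) :
    ∃ a b : Fin (n + 1), b.1 = a.1 + 1 ∧ σ b < σ a := by
  by_contra h
  push_neg at h
  apply hσ
  apply strictMono_eq_one
  rw [Fin.strictMono_iff_lt_succ]
  intro i
  have h1 := h i.castSucc i.succ (by simp)
  have hne : σ i.castSucc ≠ σ i.succ := fun hc => by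
    have := σ.injective hc
    simp [Fin.ext_iff] at this
  exact lt_of_le_of_ne h1 hne


lemma XP_mono_aux {J : Finset (RootA n)} {u : WA n} (hu : u ∈ XP n J) :
    ∀ d, ∀ x y : Fin (n + 1), y.1 = x.1 + d + 1 → SB J x.1 y.1 → u x < u y := by
  intro d
  induction d with
  | zero =>
    intro x y hxy hsb
    obtain ⟨p, hp, hp1, hp2⟩ := hsb x.1 (by omega)
    have hx : p.1 = x := Fin.ext (by omega)
    have hy : p.2 = y := Fin.ext (by omega)
    have hpe : p = (x, y) := by rw [Prod.ext_iff]; exact ⟨hx, hy⟩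
    have := mem_XP.mp hu p hp
    rwa [hpe] at this
  | succ k ih =>
    intro x y hxy hsb
    obtain ⟨p, hp, hp1, hp2⟩ := hsb x.1 (by omega)
    have hx : p.1 = x := Fin.ext (by omega)
    have h1 : u x < u p.2 := by
      have := mem_XP.mp hu p hp
      rwa [hx] at this
    have h2 : u p.2 < u y := ih p.2 y (by omega) (fun m hm => hsb m (by omega))
    exact h1.trans h2

lemma XP_mono {J : Finset (RootA n)} {u : WA n} (hu : u ∈ XP n J) {x y : Fin (n + 1)}
    (hsb : SB J x.1 y.1) (hxy : x < y) : u x < u y := by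
  have hxy' : x.1 < y.1 := hxy
  exact XP_mono_aux hu (y.1 - x.1 - 1) x y (by omega) hsb

lemma cross {J : Finset (RootA n)} {x y x' y' : Fin (n + 1)} (hxy : x < y)
    (hnb : ¬ SB J x.1 y.1) (h1 : SB J x.1 x'.1) (h2 : SB J y.1 y'.1) : x' < y' := by
  have hxy' : x.1 < y.1 := hxy
  rw [SB] at hnb
  push_neg at hnb
  obtain ⟨g, hg, hgs⟩ := hnb
  have hx' : x'.1 ≤ g := by
    by_contra hc
    exact hgs (h1 g (by omega))
  have hy' : g < y'.1 := by
    by_contra hc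
    exact hgs (h2 g (by omega))
  rw [Fin.lt_def]
  omega

lemma adj_of_sb {J : Finset (RootA n)} {u : WA n} (hu : u ∈ XP n J) {x y : Fin (n + 1)}
    (hxy : x < y) (hsb : SB J x.1 y.1) (hadj : (u y).1 = (u x).1 + 1) : (x, y) ∈ J := by
  have hxy' : x.1 < y.1 := hxy
  have hy : y.1 = x.1 + 1 := by
    by_contra hc
    have hxn : x.1 + 1 < n + 1 := by omega
    set x1 : Fin (n + 1) := ⟨x.1 + 1, hxn⟩ with hx1
    have e1 : x1.1 = x.1 + 1 := rfl
    have h1 : u x < u x1 := XP_mono hu (fun m hm => hsb m (by omega)) (by rw [Fin.lt_def]; omega)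
    have h2 : u x1 < u y := XP_mono hu (fun m hm => hsb m (by omega)) (by rw [Fin.lt_def]; omega)
    rw [Fin.lt_def] at h1 h2
    omega
  obtain ⟨p, hp, hp1, hp2⟩ := hsb x.1 (by omega)
  have hx : p.1 = x := Fin.ext (by omega)
  have hy2 : p.2 = y := Fin.ext (by omega)
  have hpe : p = (x, y) := by rw [Prod.ext_iff]; exact ⟨hx, hy2⟩
  rwa [hpe] at hp

-- single-step SB from membership
lemma sb_of_mem {J : Finset (RootA n)} (hJ : J ⊆ PiA n) {p : RootA n} (hp : p ∈ J) :
    SB J p.1.1 p.2.1 := by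
  have hadj := mem_PiA_iff.mp (hJ hp)
  intro k hk
  exact ⟨p, hp, by omega, by omega⟩

lemma uinv_mem {J K : Finset (RootA n)} {u v : WA n} (hK : K ⊆ PiA n)
    (hu : u ∈ XP n J) (hv : BSp J v) (hw : (u * v)⁻¹ ∈ XP n K) : u⁻¹ ∈ XP n K := by
  rw [mem_XP] at hw ⊢
  intro r hr
  have hradj : r.2.1 = r.1.1 + 1 := mem_PiA_iff.mp (hK hr)
  rcases lt_trichotomy (u⁻¹ r.1) (u⁻¹ r.2) with h | h | h
  · exact h
  · exfalso
    have : r.1 = r.2 := by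
      have := congrArg u h
      simpa using this
    rw [this] at hradj
    omega
  · exfalso
    by_cases hsb : SB J (u⁻¹ r.2).1 (u⁻¹ r.1).1
    · have hlt := XP_mono hu hsb h
      simp only [Equiv.Perm.inv_def, Equiv.apply_symm_apply] at hlt
      rw [Fin.lt_def] at hlt
      omega
    · have hcr := cross h hsb (BSp.inv hv (u⁻¹ r.2)) (BSp.inv hv (u⁻¹ r.1))
      have hw2 := hw r hr
      simp only [mul_inv_rev, Equiv.Perm.mul_apply] at hw2
      exact absurd hw2 (asymm hcr)

lemma vinv_mem {J K : Finset (RootA n)} {u v : WA n}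
    (hw : (u * v)⁻¹ ∈ XP n K) : v⁻¹ ∈ XP n (K.image (act n u⁻¹) ∩ J) := by
  rw [mem_XP] at hw ⊢
  intro r hr
  rw [Finset.mem_inter, Finset.mem_image] at hr
  obtain ⟨⟨s, hs, rfl⟩, -⟩ := hr
  have := hw s hs
  simpa only [mul_inv_rev, Equiv.Perm.mul_apply, act] using this

lemma winv_mem {J K : Finset (RootA n)} {u v : WA n} (hK : K ⊆ PiA n) (hJ : J ⊆ PiA n)
    (hu : u ∈ XP n J) (hv : BSp J v) (huK : u⁻¹ ∈ XP n K)
    (hvM : v⁻¹ ∈ XP n (K.image (act n u⁻¹) ∩ J)) : (u * v)⁻¹ ∈ XP n K := by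
  rw [mem_XP] at huK ⊢
  rw [mem_XP] at hvM
  intro r hr
  have hradj : r.2.1 = r.1.1 + 1 := mem_PiA_iff.mp (hK hr)
  have hxy : u⁻¹ r.1 < u⁻¹ r.2 := huK r hr
  simp only [mul_inv_rev, Equiv.Perm.mul_apply]
  by_cases hsb : SB J (u⁻¹ r.1).1 (u⁻¹ r.2).1
  · have hadj2 : (u (u⁻¹ r.2)).1 = (u (u⁻¹ r.1)).1 + 1 := by
      simpa only [Equiv.Perm.inv_def, Equiv.apply_symm_apply] using hradj
    have hmem : ((u⁻¹ r.1, u⁻¹ r.2) : RootA n) ∈ K.image (act n u⁻¹) ∩ J := by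
      rw [Finset.mem_inter, Finset.mem_image]
      exact ⟨⟨r, hr, rfl⟩, adj_of_sb hu hxy hsb hadj2⟩
    exact hvM _ hmem
  · exact cross hxy hsb (BSp.inv hv (u⁻¹ r.1)) (BSp.inv hv (u⁻¹ r.2))

lemma xn_fwd {J N : Finset (RootA n)} {u v : WA n} (hJ : J ⊆ PiA n) (hNJ : N ⊆ J)
    (hu : u ∈ XP n J) (hv : BSp J v) :
    u * v ∈ XP n N ↔ v ∈ XP n N := by
  rw [mem_XP, mem_XP]
  refine forall₂_congr fun r hr => ?_
  have hrJ := hNJ hr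
  have hadj := mem_PiA_iff.mp (hJ hrJ)
  have hsb12 : SB J r.1.1 r.2.1 := sb_of_mem hJ hrJ
  have h1 : SB J (v r.1).1 (v r.2).1 := ((hv r.1).symm.trans hsb12).trans (hv r.2)
  simp only [Equiv.Perm.mul_apply]
  constructor
  · intro h
    by_contra hc
    have hne : v r.2 ≠ v r.1 := by
      intro he
      have := v.injective he
      rw [this] at hadj
      omega
    have hlt : v r.2 < v r.1 := lt_of_le_of_ne (not_lt.mp hc) hne
    have := XP_mono hu h1.symm hlt
    exact absurd h (asymm this)
  · intro h
    exact XP_mono hu h1 h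

lemma act_mul_inv (u v : WA n) (r : RootA n) :
    act n (u * v)⁻¹ r = act n v⁻¹ (act n u⁻¹ r) := by
  simp [act, mul_inv_rev]

lemma image_eq {J K N : Finset (RootA n)} {u v : WA n} (hK : K ⊆ PiA n) (hJ : J ⊆ PiA n)
    (hNJ : N ⊆ J) (hu : u ∈ XP n J) (hv : BSp J v) (huK : u⁻¹ ∈ XP n K) :
    K.image (act n (u * v)⁻¹) ∩ N = (K.image (act n u⁻¹) ∩ J).image (act n v⁻¹) ∩ N := by
  ext t
  simp only [Finset.mem_inter, Finset.mem_image]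
  constructor
  · rintro ⟨⟨r, hr, rfl⟩, htN⟩
    refine ⟨⟨(u⁻¹ r.1, u⁻¹ r.2), ⟨⟨r, hr, rfl⟩, ?_⟩, (act_mul_inv u v r).symm⟩, htN⟩
    -- show (u⁻¹ r.1, u⁻¹ r.2) ∈ J
    have hradj : r.2.1 = r.1.1 + 1 := mem_PiA_iff.mp (hK hr)
    have hxy : u⁻¹ r.1 < u⁻¹ r.2 := mem_XP.mp huK r hr
    have htJ : act n (u * v)⁻¹ r ∈ J := hNJ htN
    have htsb : SB J ((u * v)⁻¹ r.1).1 ((u * v)⁻¹ r.2).1 := sb_of_mem hJ htJ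
    have hsb : SB J (u⁻¹ r.1).1 (u⁻¹ r.2).1 := by
      have e1 : (u * v)⁻¹ r.1 = v⁻¹ (u⁻¹ r.1) := by simp [mul_inv_rev]
      have e2 : (u * v)⁻¹ r.2 = v⁻¹ (u⁻¹ r.2) := by simp [mul_inv_rev]
      rw [e1, e2] at htsb
      exact ((BSp.inv hv (u⁻¹ r.1)).trans htsb).trans (BSp.inv hv (u⁻¹ r.2)).symm
    have hadj2 : (u (u⁻¹ r.2)).1 = (u (u⁻¹ r.1)).1 + 1 := by
      simpa only [Equiv.Perm.inv_def, Equiv.apply_symm_apply] using hradj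
    exact adj_of_sb hu hxy hsb hadj2
  · rintro ⟨⟨s, ⟨⟨r, hr, rfl⟩, hsJ⟩, rfl⟩, htN⟩
    exact ⟨⟨r, hr, (act_mul_inv u v r)⟩, htN⟩


lemma exists_factor_aux {J : Finset (RootA n)} (hJ : J ⊆ PiA n) :
    ∀ c, ∀ w : WA n, (InvF w).card ≤ c → ∃ v, v ∈ WP n J ∧ w * v ∈ XP n J := by
  intro c
  induction c with
  | zero =>
    intro w hw
    by_cases hx : w ∈ XP n J
    · exact ⟨1, one_mem _, by simpa using hx⟩
    · exfalso
      rw [mem_XP] at hx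
      push_neg at hx
      obtain ⟨r, hrJ, hr⟩ := hx
      have hadj := mem_PiA_iff.mp (hJ hrJ)
      have hlt : r.1 < r.2 := by rw [Fin.lt_def]; omega
      have hd : w r.2 < w r.1 := by
        rcases lt_trichotomy (w r.1) (w r.2) with h | h | h
        · exact absurd h (not_lt.mpr hr)
        · exfalso; have := w.injective h; rw [this] at hadj; omega
        · exact h
      have : (r.1, r.2) ∈ InvF w := by simp [InvF, hlt, hd]
      have := Finset.card_pos.mpr ⟨_, this⟩
      omega
  | succ c ih =>
    intro w hw
    by_cases hx : w ∈ XP n J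
    · exact ⟨1, one_mem _, by simpa using hx⟩
    · rw [mem_XP] at hx
      push_neg at hx
      obtain ⟨r, hrJ, hr⟩ := hx
      have hadj := mem_PiA_iff.mp (hJ hrJ)
      have hd : w r.2 < w r.1 := by
        rcases lt_trichotomy (w r.1) (w r.2) with h | h | h
        · exact absurd h (not_lt.mpr hr)
        · exfalso; have := w.injective h; rw [this] at hadj; omega
        · exact h
      have hdec := invF_desc hadj hd
      obtain ⟨v', hv'1, hv'2⟩ := ih (w * Equiv.swap r.1 r.2) (by omega)
      refine ⟨Equiv.swap r.1 r.2 * v', mul_mem ?_ hv'1, by rwa [← mul_assoc]⟩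
      exact Subgroup.subset_closure ⟨r, hrJ, rfl⟩

lemma exists_factor {J : Finset (RootA n)} (hJ : J ⊆ PiA n) (w : WA n) :
    ∃ v, v ∈ WP n J ∧ w * v ∈ XP n J :=
  exists_factor_aux hJ (InvF w).card w le_rfl

lemma step_of_desc {J : Finset (RootA n)} {v : WA n} (hv : BSp J v)
    {a b : Fin (n + 1)} (hab : b.1 = a.1 + 1) (hd : v b < v a) : (a, b) ∈ J := by
  have hdv : (v b).1 < (v a).1 := hd
  have hstep : StepJ J a.1 := by
    by_contra hs
    have h1 := hv a
    have h2 := hv b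
    have ha : (v a).1 ≤ a.1 := by
      by_contra hc
      exact hs (h1 a.1 (by omega))
    have hb2 : b.1 ≤ (v b).1 := by
      by_contra hc
      exact hs (h2 a.1 (by omega))
    omega
  obtain ⟨p, hp, hp1, hp2⟩ := hstep
  have hx : p.1 = a := Fin.ext (by omega)
  have hy : p.2 = b := Fin.ext (by omega)
  have hpe : p = (a, b) := by rw [Prod.ext_iff]; exact ⟨hx, hy⟩
  rwa [hpe] at hp

lemma factor_unique {J : Finset (RootA n)} (hJ : J ⊆ PiA n) {u v : WA n}
    (hu : u ∈ XP n J) (hv : BSp J v) (huv : u * v ∈ XP n J) : v = 1 := by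
  by_contra hne
  obtain ⟨a, b, hab, hd⟩ := exists_desc hne
  have hpJ : (a, b) ∈ J := step_of_desc hv hab hd
  have hsbab : SB J a.1 b.1 := sb_of_mem hJ hpJ
  have h1 : SB J (v b).1 (v a).1 := ((hv b).symm.trans hsbab.symm).trans (hv a)
  have h2 := XP_mono hu h1 hd
  have h3 := mem_XP.mp huv (a, b) hpJ
  simp only [Equiv.Perm.mul_apply] at h3
  exact absurd h3 (asymm h2)


lemma mem_XD {J K : Finset (RootA n)} {w : WA n} :
    w ∈ XD n J K ↔ w⁻¹ ∈ XP n J ∧ w ∈ XP n K := by simp [XD]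

end SCAux

open SCAux in
theorem structure_constants_identity (n : ℕ) (hn : 1 ≤ n) (K N J P : Finset (RootA n))
    (hK : K ⊆ PiA n) (hPN : P ⊆ N) (hNJ : N ⊆ J) (hJ : J ⊆ PiA n) :
    aC n K N P = ∑ M ∈ J.powerset, aC n K J M * aCrel n J M N P := by
  classical
  choose vf hvfWP hvfX using fun w : WA n => SCAux.exists_factor hJ w
  set A : Finset (RootA n) → Finset (WA n) :=
    fun M => (XD n K J).filter fun u => K.image (act n u⁻¹) ∩ J = M with hA
  set B : Finset (RootA n) → Finset (WA n) :=
    fun M => ((XD n M N).filter fun w => w ∈ WP n J).filter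
      fun v => M.image (act n v⁻¹) ∩ N = P with hB
  have key : ∀ M ∈ J.powerset, aC n K J M * aCrel n J M N P = ((A M) ×ˢ (B M)).card :=
    fun M _ => (Finset.card_product _ _).symm
  rw [Finset.sum_congr rfl key, ← Finset.card_sigma]
  show ((XD n K N).filter fun w => K.image (act n w⁻¹) ∩ N = P).card = _
  apply Finset.card_bij'
    (i := fun w _ => (⟨K.image (act n (w * vf w)⁻¹) ∩ J, (w * vf w, (vf w)⁻¹)⟩ :
      (_ : Finset (RootA n)) × (WA n × WA n)))
    (j := fun x _ => x.2.1 * x.2.2)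
  · -- hi
    intro w hw
    rw [Finset.mem_filter, mem_XD] at hw
    obtain ⟨⟨hwK, hwN⟩, hwP⟩ := hw
    set u := w * vf w with hu_def
    set v := (vf w)⁻¹ with hv_def
    have hfact : u * v = w := by rw [hu_def, hv_def, mul_inv_cancel_right]
    have hu : u ∈ XP n J := hvfX w
    have hvB : BSp J v := wp_bsp hJ (inv_mem (hvfWP w))
    have hwK' : (u * v)⁻¹ ∈ XP n K := by rw [hfact]; exact hwK
    have huK : u⁻¹ ∈ XP n K := uinv_mem hK hu hvB hwK'
    have hvM : v⁻¹ ∈ XP n (K.image (act n u⁻¹) ∩ J) := vinv_mem hwK'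
    have hvN : v ∈ XP n N := (xn_fwd hJ hNJ hu hvB).mp (by rw [hfact]; exact hwN)
    have himg : (K.image (act n u⁻¹) ∩ J).image (act n v⁻¹) ∩ N = P := by
      rw [← image_eq hK hJ hNJ hu hvB huK, hfact]
      exact hwP
    rw [Finset.mem_sigma]
    constructor
    · exact Finset.mem_powerset.mpr Finset.inter_subset_right
    · rw [Finset.mem_product]
      constructor
      · rw [hA]
        dsimp only
        rw [Finset.mem_filter, mem_XD]
        exact ⟨⟨huK, hu⟩, rfl⟩
      · rw [hB]
        dsimp only
        rw [Finset.mem_filter, Finset.mem_filter, mem_XD]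
        exact ⟨⟨⟨hvM, hvN⟩, inv_mem (hvfWP w)⟩, himg⟩
  · -- hj
    rintro ⟨M, u, v⟩ hx
    rw [Finset.mem_sigma, Finset.mem_product] at hx
    obtain ⟨hMJ, hxu, hxv⟩ := hx
    rw [hA] at hxu; rw [hB] at hxv
    dsimp only at hxu hxv
    rw [Finset.mem_filter, mem_XD] at hxu
    rw [Finset.mem_filter, Finset.mem_filter, mem_XD] at hxv
    obtain ⟨⟨huK, hu⟩, hMdef⟩ := hxu
    obtain ⟨⟨⟨hvM, hvN⟩, hvWP⟩, hvP⟩ := hxv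
    have hvB : BSp J v := wp_bsp hJ hvWP
    have hvM' : v⁻¹ ∈ XP n (K.image (act n u⁻¹) ∩ J) := by rw [hMdef]; exact hvM
    rw [Finset.mem_filter, mem_XD]
    refine ⟨⟨winv_mem hK hJ hu hvB huK hvM', (xn_fwd hJ hNJ hu hvB).mpr hvN⟩, ?_⟩
    rw [image_eq hK hJ hNJ hu hvB huK, hMdef]
    exact hvP
  · -- left_inv
    intro w _
    exact mul_inv_cancel_right w (vf w)
  · -- right_inv
    rintro ⟨M, u, v⟩ hx
    rw [Finset.mem_sigma, Finset.mem_product] at hx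
    obtain ⟨hMJ, hxu, hxv⟩ := hx
    rw [hA] at hxu; rw [hB] at hxv
    dsimp only at hxu hxv ⊢
    rw [Finset.mem_filter, mem_XD] at hxu
    rw [Finset.mem_filter, Finset.mem_filter, mem_XD] at hxv
    obtain ⟨⟨huK, hu⟩, hMdef⟩ := hxu
    obtain ⟨⟨⟨hvM, hvN⟩, hvWP⟩, hvP⟩ := hxv
    have hz : v * vf (u * v) = 1 := by
      apply factor_unique hJ hu (wp_bsp hJ (mul_mem hvWP (hvfWP (u * v))))
      rw [← mul_assoc]
      exact hvfX (u * v)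
    have hvf_eq : vf (u * v) = v⁻¹ := eq_inv_of_mul_eq_one_right hz
    have e1 : u * v * vf (u * v) = u := by rw [hvf_eq, mul_inv_cancel_right]
    have e2 : (vf (u * v))⁻¹ = v := by rw [hvf_eq, inv_inv]
    rw [e1, e2, hMdef]
end
end

section
/- For all J, K ⊆ Π, in the rational group algebra ℚ[W] one has Solomon's multiplication rule x_J · x_K = Σ_{L ⊆ K} a_{JKL} · x_L. -/
open scoped Classical

noncomputable section

namespace Solomon

variable {n : ℕ} {J : Finset (RootA n)}

/-- `w` is increasing on all pairs in `J` (i.e. the `XP` condition). -/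
def inc (J : Finset (RootA n)) (w : WA n) : Prop := ∀ p ∈ J, w p.1 < w p.2

/-- `a` and `b` lie in the same `J`-block: every adjacent simple pair between them is in `J`. -/
def sameB (J : Finset (RootA n)) (a b : Fin (n + 1)) : Prop :=
  ∀ i : Fin n, min a.val b.val ≤ i.val → i.val + 1 ≤ max a.val b.val →
    ((i.castSucc, i.succ) : RootA n) ∈ J

lemma sameB_refl (a : Fin (n + 1)) : sameB J a a := by
  intro i h1 h2
  exact ((by omega : False)).elim

lemma sameB_symm {a b : Fin (n + 1)} (h : sameB J a b) : sameB J b a := by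
  intro i h1 h2
  exact h i (by omega) (by omega)

lemma sameB_trans {a b c : Fin (n + 1)} (hab : sameB J a b) (hbc : sameB J b c) :
    sameB J a c := by
  intro i h1 h2
  by_cases hc : min a.val b.val ≤ i.val ∧ i.val + 1 ≤ max a.val b.val
  · exact hab i hc.1 hc.2
  · exact hbc i (by omega) (by omega)

lemma sameB_between {a b c : Fin (n + 1)} (h : sameB J a b)
    (h1 : min a.val b.val ≤ c.val) (h2 : c.val ≤ max a.val b.val) : sameB J a c := by
  intro i hi1 hi2
  exact h i (by omega) (by omega)

lemma mem_PiA_iff {p : RootA n} :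
    p ∈ PiA n ↔ ∃ i : Fin n, p = (Fin.castSucc i, Fin.succ i) := by
  simp [PiA, eq_comm]

lemma sameB_of_mem {q : RootA n} (hq : q ∈ J) (hq' : q ∈ PiA n) : sameB J q.1 q.2 := by
  obtain ⟨i, rfl⟩ := mem_PiA_iff.mp hq'
  intro i' h1 h2
  simp only [Fin.coe_castSucc, Fin.val_succ] at h1 h2
  have : i' = i := Fin.ext (by omega)
  rwa [this]

lemma mem_of_adj {i : Fin n} (h : sameB J (Fin.castSucc i) (Fin.succ i)) :
    ((i.castSucc, i.succ) : RootA n) ∈ J := by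
  refine h i ?_ ?_ <;> simp [Fin.val_succ]

lemma lt_of_mem_PiA {p : RootA n} (hp : p ∈ PiA n) : p.1 < p.2 := by
  obtain ⟨i, rfl⟩ := mem_PiA_iff.mp hp
  exact Fin.castSucc_lt_succ (i := i)

lemma inc_mono_aux {d : WA n} (hd : inc J d) :
    ∀ k (a b : Fin (n + 1)), b.val ≤ a.val + k → sameB J a b → a < b → d a < d b := by
  intro k
  induction k with
  | zero =>
    intro a b hk _ hab
    exact absurd (Fin.lt_def.mp hab) (by omega)
  | succ k ih =>
    intro a b hk hs hab
    have hab' := Fin.lt_def.mp hab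
    have hbn := b.isLt
    have han : a.val < n := by omega
    set i : Fin n := ⟨a.val, han⟩ with hi
    have hA : i.castSucc = a := Fin.ext (by simp [hi])
    have hmem : ((i.castSucc, i.succ) : RootA n) ∈ J := by
      refine hs i ?_ ?_ <;> simp [hi] <;> omega
    have h1 : d i.castSucc < d i.succ := hd _ hmem
    rw [hA] at h1
    have hsucc : (i.succ : Fin (n + 1)).val = a.val + 1 := by simp [hi]
    rcases eq_or_lt_of_le (show (i.succ : Fin (n + 1)).val ≤ b.val by omega) with heq | hlt
    · rwa [Fin.ext heq] at h1
    · have hs1 : sameB J a i.succ := sameB_between hs (by omega) (by omega)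
      have hs2 : sameB J i.succ b := sameB_trans (sameB_symm hs1) hs
      exact h1.trans (ih i.succ b (by omega) hs2 (Fin.lt_def.mpr hlt))

lemma inc_mono {d : WA n} (hd : inc J d) {a b : Fin (n + 1)} (hs : sameB J a b)
    (hab : a < b) : d a < d b :=
  inc_mono_aux hd b.val a b (by omega) hs hab

lemma inc_reflect {d : WA n} (hd : inc J d) {a b : Fin (n + 1)} (hs : sameB J a b)
    (h : d a < d b) : a < b := by
  rcases lt_trichotomy a b with h' | h' | h'
  · exact h'
  · subst h'; exact absurd h (lt_irrefl _)
  · exact absurd (inc_mono hd (sameB_symm hs) h') (lt_asymm h)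

lemma cross {u : WA n} (hu : ∀ x, sameB J x (u x)) {a b : Fin (n + 1)}
    (hab : a < b) (hn : ¬ sameB J a b) : u a < u b := by
  rcases lt_trichotomy (u a) (u b) with h | h | h
  · exact h
  · exact absurd (u.injective h) (ne_of_lt hab)
  · exfalso
    apply hn
    intro i h1 h2
    have ha := hu a
    have hb := hu b
    by_cases hc : min a.val (u a).val ≤ i.val ∧ i.val + 1 ≤ max a.val (u a).val
    · exact ha i hc.1 hc.2
    · have h' := Fin.lt_def.mp h
      have hab' := Fin.lt_def.mp hab
      refine hb i ?_ ?_ <;> omega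

lemma swap_sameB {p : RootA n} (hp : p ∈ J) (hp2 : p ∈ PiA n) :
    ∀ a, sameB J a (Equiv.swap p.1 p.2 a) := by
  intro a
  rcases eq_or_ne a p.1 with rfl | h1
  · rw [Equiv.swap_apply_left]
    exact sameB_of_mem hp hp2
  · rcases eq_or_ne a p.2 with rfl | h2
    · rw [Equiv.swap_apply_right]
      exact sameB_symm (sameB_of_mem hp hp2)
    · rw [Equiv.swap_apply_of_ne_of_ne h1 h2]
      exact sameB_refl a

lemma wp_sameB (hJ : J ⊆ PiA n) {u : WA n} (hu : u ∈ WP n J) :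
    ∀ a, sameB J a (u a) := by
  induction hu using Subgroup.closure_induction with
  | mem x hx =>
    obtain ⟨p, hp, rfl⟩ := hx
    exact swap_sameB hp (hJ hp)
  | one => intro a; simpa using sameB_refl (J := J) a
  | mul x y hx hy px py =>
    intro a
    have : (x * y) a = x (y a) := rfl
    rw [this]
    exact sameB_trans (py a) (px (y a))
  | inv x hx px =>
    intro a
    have := px (x⁻¹ a)
    rw [show ∀ y, x (x⁻¹ y) = y from fun y => x.apply_symm_apply y] at this
    exact sameB_symm this

end Solomon

namespace Solomon

variable {n : ℕ} {J : Finset (RootA n)}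

/-- The set of "inversions within blocks" of `g`. -/
def F (J : Finset (RootA n)) (g : WA n) : Finset (RootA n) :=
  Finset.univ.filter fun x => x.1 < x.2 ∧ sameB J x.1 x.2 ∧ g x.2 < g x.1

lemma swap_lt {p : RootA n} (hp2 : p ∈ PiA n) {x : RootA n} (hx : x.1 < x.2)
    (hne : x ≠ p) : Equiv.swap p.1 p.2 x.1 < Equiv.swap p.1 p.2 x.2 := by
  obtain ⟨i, rfl⟩ := mem_PiA_iff.mp hp2
  have hlt := Fin.lt_def.mp hx
  have hne' : ¬(x.1 = Fin.castSucc i ∧ x.2 = Fin.succ i) := by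
    intro ⟨h1, h2⟩; exact hne (by rw [← h1, ← h2])
  rw [Fin.lt_def]
  simp only [Equiv.swap_apply_def]
  have e1 : (Fin.castSucc i).val = i.val := rfl
  have e2 : (Fin.succ i : Fin (n+1)).val = i.val + 1 := rfl
  split_ifs <;> simp only [Fin.ext_iff, Fin.val_succ, Fin.coe_castSucc] at * <;> omega

lemma card_F_swap_lt {g : WA n} {p : RootA n} (hp : p ∈ J) (hp2 : p ∈ PiA n)
    (hdesc : g p.2 < g p.1) :
    (F J (g * Equiv.swap p.1 p.2)).card < (F J g).card := by
  set s := Equiv.swap p.1 p.2 with hs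
  have hp1 : p.1 < p.2 := lt_of_mem_PiA hp2
  have hsB : ∀ a, sameB J a (s a) := swap_sameB hp hp2
  have hpF : p ∈ F J g := by
    simp only [F, Finset.mem_filter, Finset.mem_univ, true_and]
    exact ⟨hp1, sameB_of_mem hp hp2, hdesc⟩
  have key : (F J (g * s)).card = (F J g \ {p}).card := by
    apply Finset.card_bij' (fun x _ => (s x.1, s x.2)) (fun y _ => (s y.1, s y.2))
    · -- maps into F J g \ {p}
      intro x hx
      simp only [F, Finset.mem_filter, Finset.mem_univ, true_and] at hx
      obtain ⟨h1, h2, h3⟩ := hx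
      have hxne : x ≠ p := by
        rintro rfl
        simp only [hs, Equiv.Perm.mul_apply, Equiv.swap_apply_left,
          Equiv.swap_apply_right] at h3
        exact absurd h3 (lt_asymm hdesc)
      have hlt : s x.1 < s x.2 := swap_lt hp2 h1 hxne
      have hBB : sameB J (s x.1) (s x.2) :=
        sameB_trans (sameB_symm (hsB x.1)) (sameB_trans h2 (hsB x.2))
      simp only [Finset.mem_sdiff, Finset.mem_singleton, F, Finset.mem_filter,
        Finset.mem_univ, true_and]
      refine ⟨⟨hlt, hBB, h3⟩, ?_⟩
      intro hcon
      have h1' : s x.1 = p.1 := congrArg Prod.fst hcon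
      have h2' : s x.2 = p.2 := congrArg Prod.snd hcon
      have : x.1 = s p.1 := by rw [← h1', Equiv.swap_apply_self]
      have hx2 : x.2 = s p.2 := by rw [← h2', Equiv.swap_apply_self]
      rw [hs] at this hx2
      rw [this, hx2, Equiv.swap_apply_left, Equiv.swap_apply_right] at h1
      exact absurd h1 (lt_asymm hp1)
    · -- backward maps into F J (g * s)
      intro y hy
      simp only [Finset.mem_sdiff, Finset.mem_singleton, F, Finset.mem_filter,
        Finset.mem_univ, true_and] at hy
      obtain ⟨⟨h1, h2, h3⟩, hne⟩ := hy
      have hlt : s y.1 < s y.2 := swap_lt hp2 h1 hne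
      have hBB : sameB J (s y.1) (s y.2) :=
        sameB_trans (sameB_symm (hsB y.1)) (sameB_trans h2 (hsB y.2))
      simp only [F, Finset.mem_filter, Finset.mem_univ, true_and]
      refine ⟨hlt, hBB, ?_⟩
      simpa only [hs, Equiv.Perm.mul_apply, Equiv.swap_apply_self] using h3
    · intro x _; simp [hs, Equiv.swap_apply_self]
    · intro y _; simp [hs, Equiv.swap_apply_self]
  rw [key, Finset.card_sdiff_of_subset (Finset.singleton_subset_iff.mpr hpF)]
  have := Finset.card_pos.mpr ⟨p, hpF⟩
  simp only [Finset.card_singleton]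
  omega

lemma exists_fact_aux (hJ : J ⊆ PiA n) :
    ∀ m (g : WA n), (F J g).card ≤ m → ∃ u ∈ WP n J, inc J (g * u) := by
  intro m
  induction m with
  | zero =>
    intro g hg
    refine ⟨1, one_mem _, ?_⟩
    rw [mul_one]
    intro p hp
    by_contra hc
    have hp1 : p.1 < p.2 := lt_of_mem_PiA (hJ hp)
    have hne : g p.2 ≠ g p.1 := fun h => absurd (g.injective h) (ne_of_lt hp1).symm
    have : g p.2 < g p.1 := lt_of_le_of_ne (not_lt.mp hc) hne
    have hpF : p ∈ F J g := by
      simp only [F, Finset.mem_filter, Finset.mem_univ, true_and]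
      exact ⟨hp1, sameB_of_mem hp (hJ hp), this⟩
    have := Finset.card_pos.mpr ⟨p, hpF⟩
    omega
  | succ m ih =>
    intro g hg
    by_cases hdone : inc J g
    · exact ⟨1, one_mem _, by rwa [mul_one]⟩
    · simp only [inc, not_forall] at hdone
      obtain ⟨p, hp, hc⟩ := hdone
      have hp1 : p.1 < p.2 := lt_of_mem_PiA (hJ hp)
      have hne : g p.2 ≠ g p.1 := fun h => absurd (g.injective h) (ne_of_lt hp1).symm
      have hdesc : g p.2 < g p.1 := lt_of_le_of_ne (not_lt.mp hc) hne
      have hcard := card_F_swap_lt (J := J) hp (hJ hp) hdesc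
      obtain ⟨u, hu, hinc⟩ := ih (g * Equiv.swap p.1 p.2) (by omega)
      refine ⟨Equiv.swap p.1 p.2 * u, ?_, ?_⟩
      · exact mul_mem (Subgroup.subset_closure ⟨p, hp, rfl⟩) hu
      · rwa [← mul_assoc]

lemma exists_fact (hJ : J ⊆ PiA n) (g : WA n) : ∃ u ∈ WP n J, inc J (g * u) :=
  exists_fact_aux hJ (F J g).card g le_rfl

lemma strictMono_eq_one {u : WA n} (hu : StrictMono u) : u = 1 := by
  have hle : ∀ v : WA n, StrictMono v → ∀ x : Fin (n + 1), x.val ≤ (v x).val := by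
    intro v hv
    have : ∀ k, ∀ x : Fin (n + 1), x.val = k → k ≤ (v x).val := by
      intro k
      induction k with
      | zero => intro x _; omega
      | succ k ihk =>
        intro x hx
        have hk : k < n + 1 := by omega
        set y : Fin (n + 1) := ⟨k, hk⟩ with hy
        have hyval : y.val = k := rfl
        have hyx : y < x := by rw [Fin.lt_def]; omega
        have h1 := ihk y hyval
        have h2 := Fin.lt_def.mp (hv hyx)
        omega
    intro x; exact this x.val x rfl
  have huinv : StrictMono (u⁻¹ : WA n) := by
    intro a b hab
    rcases lt_trichotomy ((u⁻¹ : WA n) a) ((u⁻¹ : WA n) b) with h | h | h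
    · exact h
    · exact absurd ((u⁻¹ : WA n).injective h ▸ hab) (lt_irrefl _)
    · have := hu h
      rw [show ∀ y, u (u⁻¹ y) = y from fun y => u.apply_symm_apply y,
        show ∀ y, u (u⁻¹ y) = y from fun y => u.apply_symm_apply y] at this
      exact absurd hab (lt_asymm this)
  have key : ∀ x, u x = x := by
    intro x
    have h1 := hle u hu x
    have h2 := hle (u⁻¹ : WA n) huinv (u x)
    rw [show (u⁻¹ : WA n) (u x) = x from u.symm_apply_apply x] at h2
    exact Fin.ext (le_antisymm h2 h1)
  exact Equiv.ext key

lemma fact_unique_core (hJ : J ⊆ PiA n) {d u : WA n} (hd : inc J d)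
    (hdu : inc J (d * u)) (hu : u ∈ WP n J) : u = 1 := by
  apply strictMono_eq_one
  intro a b hab
  by_cases hs : sameB J a b
  · have h1 : (d * u) a < (d * u) b := inc_mono hdu hs hab
    have h1' : d (u a) < d (u b) := h1
    have hB : sameB J (u a) (u b) :=
      sameB_trans (sameB_symm (wp_sameB hJ hu a)) (sameB_trans hs (wp_sameB hJ hu b))
    exact inc_reflect hd hB h1'
  · exact cross (wp_sameB hJ hu) hab hs

lemma fact_unique (hJ : J ⊆ PiA n) {d₁ d₂ u₁ u₂ : WA n} (hd₁ : inc J d₁)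
    (hd₂ : inc J d₂) (hu₁ : u₁ ∈ WP n J) (hu₂ : u₂ ∈ WP n J)
    (heq : d₁ * u₁ = d₂ * u₂) : d₁ = d₂ ∧ u₁ = u₂ := by
  have hkey : d₂ * (u₂ * u₁⁻¹) = d₁ := by
    rw [← mul_assoc, ← heq, mul_assoc, mul_inv_cancel, mul_one]
  have hu : u₂ * u₁⁻¹ ∈ WP n J := mul_mem hu₂ (inv_mem hu₁)
  have : u₂ * u₁⁻¹ = 1 := fact_unique_core hJ hd₂ (by rwa [hkey]) hu
  have hu12 : u₂ = u₁ := by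
    have := congrArg (· * u₁) this
    simpa [mul_assoc] using this
  refine ⟨?_, hu12.symm⟩
  have := heq
  rw [hu12] at this
  exact mul_right_cancel this

end Solomon

namespace Solomon

variable {n : ℕ}

def LL (n : ℕ) (J K : Finset (RootA n)) (w : WA n) : Finset (RootA n) :=
  J.image (act n w⁻¹) ∩ K

lemma mem_XP_iff {J : Finset (RootA n)} {w : WA n} : w ∈ XP n J ↔ inc J w := by
  simp only [XP, Finset.mem_filter, Finset.mem_univ, true_and]
  rfl

lemma mem_XD_iff {J K : Finset (RootA n)} {w : WA n} :
    w ∈ XD n J K ↔ inc J w⁻¹ ∧ inc K w := by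
  simp only [XD, Finset.mem_filter, Finset.mem_univ, true_and, mem_XP_iff]

lemma adj_force {J : Finset (RootA n)} {w : WA n} (hwJ : inc J w⁻¹)
    {a b : Fin (n + 1)} (hs : sameB J a b) (hab : a < b)
    (hcons : (w⁻¹ b).val = (w⁻¹ a).val + 1) : b.val = a.val + 1 := by
  by_contra hne
  have hab' := Fin.lt_def.mp hab
  have hbn := b.isLt
  have hcc : a.val + 1 < b.val := by omega
  set c : Fin (n + 1) := ⟨a.val + 1, by omega⟩ with hcdef
  have hcval : c.val = a.val + 1 := rfl
  have hac : sameB J a c := sameB_between hs (by omega) (by omega)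
  have hcb : sameB J c b := sameB_trans (sameB_symm hac) hs
  have h1 : w⁻¹ a < w⁻¹ c := inc_mono hwJ hac (Fin.lt_def.mpr (by omega))
  have h2 : w⁻¹ c < w⁻¹ b := inc_mono hwJ hcb (Fin.lt_def.mpr (by omega))
  have g1 := Fin.lt_def.mp h1
  have g2 := Fin.lt_def.mp h2
  omega

end Solomon


open Solomon in
/-- Solomon's multiplication rule: for all `J, K ⊆ Π`, in `ℚ[W]` one has
`x_J · x_K = Σ_{L ⊆ K} a_{JKL} · x_L`. -/
theorem solomon_rule (n : ℕ) (hn : 1 ≤ n) (J K : Finset (RootA n))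
    (hJ : J ⊆ PiA n) (hK : K ⊆ PiA n) :
    xA n J * xA n K = ∑ L ∈ K.powerset, (aC n J K L : ℚ) • xA n L := by
  classical
  choose U hU hUinc using fun g : WA n => exists_fact hJ g
  have hmaps : ∀ w ∈ XD n J K, LL n J K w ∈ K.powerset :=
    fun w _ => Finset.mem_powerset.mpr Finset.inter_subset_right
  have hstep : ∀ L ∈ K.powerset, (aC n J K L : ℚ) • xA n L
      = ∑ w ∈ (XD n J K).filter (fun w => LL n J K w = L), xA n (LL n J K w) := by
    intro L _
    rw [Finset.sum_congr rfl (fun w hw => by rw [(Finset.mem_filter.mp hw).2]),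
        Finset.sum_const, Nat.cast_smul_eq_nsmul]
    rfl
  have hRHS : ∑ L ∈ K.powerset, (aC n J K L : ℚ) • xA n L
      = ∑ w ∈ XD n J K, xA n (LL n J K w) := by
    rw [Finset.sum_congr rfl hstep]
    exact Finset.sum_fiberwise_of_maps_to hmaps _
  have hmain : ∑ x ∈ XP n J ×ˢ XP n K, MonoidAlgebra.of ℚ (WA n) (x.1 * x.2)
      = ∑ x ∈ (XD n J K).sigma (fun w => XP n (LL n J K w)),
          MonoidAlgebra.of ℚ (WA n) x.2 := by
    refine Finset.sum_nbij'
      (fun x => ⟨(U x.2⁻¹)⁻¹ * x.2, x.1 * x.2⟩)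
      (fun y => (y.2 * y.1⁻¹ * U (y.2 * y.1⁻¹), (U (y.2 * y.1⁻¹))⁻¹ * y.1))
      ?_ ?_ ?_ ?_ ?_
    · -- forward map lands in the sigma set
      rintro ⟨d, e⟩ hx
      obtain ⟨hd, he⟩ := Finset.mem_product.mp hx
      rw [mem_XP_iff] at hd he
      dsimp only
      rw [Finset.mem_sigma]
      have hwinv : ((U e⁻¹)⁻¹ * e)⁻¹ = e⁻¹ * U e⁻¹ := by group
      have hu0 : (U e⁻¹)⁻¹ ∈ WP n J := inv_mem (hU e⁻¹)
      constructor
      · rw [mem_XD_iff, hwinv]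
        refine ⟨hUinc e⁻¹, ?_⟩
        intro p hp
        have ha : e p.1 < e p.2 := he p hp
        show (U e⁻¹)⁻¹ (e p.1) < (U e⁻¹)⁻¹ (e p.2)
        by_cases hs : sameB J (e p.1) (e p.2)
        · refine inc_reflect (hUinc e⁻¹) ?_ ?_
          · exact sameB_trans (sameB_symm (wp_sameB hJ hu0 (e p.1)))
              (sameB_trans hs (wp_sameB hJ hu0 (e p.2)))
          · have hcomp : ∀ x, (e⁻¹ * U e⁻¹) ((U e⁻¹)⁻¹ (e x)) = x := by
              intro x
              simp [Equiv.Perm.mul_apply]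
            rw [hcomp, hcomp]
            exact lt_of_mem_PiA (hK hp)
        · exact cross (wp_sameB hJ hu0) ha hs
      · rw [mem_XP_iff]
        intro p hp
        obtain ⟨hp1, hpK⟩ := Finset.mem_inter.mp hp
        obtain ⟨q, hq, rfl⟩ := Finset.mem_image.mp hp1
        have hcomp : ∀ x, e (((U e⁻¹)⁻¹ * e)⁻¹ x) = U e⁻¹ x := by
          intro x
          have hwinv : ((U e⁻¹)⁻¹ * e)⁻¹ = e⁻¹ * U e⁻¹ := by group
          rw [hwinv]
          simp [Equiv.Perm.mul_apply]
        have hact1 : (act n ((U e⁻¹)⁻¹ * e)⁻¹ q).1 = ((U e⁻¹)⁻¹ * e)⁻¹ q.1 := rfl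
        have hact2 : (act n ((U e⁻¹)⁻¹ * e)⁻¹ q).2 = ((U e⁻¹)⁻¹ * e)⁻¹ q.2 := rfl
        have h1 : e ((act n ((U e⁻¹)⁻¹ * e)⁻¹ q).1) < e ((act n ((U e⁻¹)⁻¹ * e)⁻¹ q).2) :=
          he _ hpK
        have hsB : sameB J (e ((act n ((U e⁻¹)⁻¹ * e)⁻¹ q).1))
            (e ((act n ((U e⁻¹)⁻¹ * e)⁻¹ q).2)) := by
          rw [hact1, hact2, hcomp, hcomp]
          exact sameB_trans (sameB_symm (wp_sameB hJ (hU e⁻¹) q.1))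
            (sameB_trans (sameB_of_mem hq (hJ hq)) (wp_sameB hJ (hU e⁻¹) q.2))
        show d (e _) < d (e _)
        exact inc_mono hd hsB h1
    · -- backward map lands in the product
      rintro ⟨w, h⟩ hx
      rw [Finset.mem_sigma] at hx
      obtain ⟨hw, hh⟩ := hx
      obtain ⟨hwJ, hwK⟩ := mem_XD_iff.mp hw
      rw [mem_XP_iff] at hh
      dsimp only
      rw [Finset.mem_product]
      refine ⟨mem_XP_iff.mpr (hUinc (h * w⁻¹)), ?_⟩
      rw [mem_XP_iff]
      intro p hp
      have hab : w p.1 < w p.2 := hwK p hp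
      have huc : (U (h * w⁻¹))⁻¹ ∈ WP n J := inv_mem (hU _)
      show (U (h * w⁻¹))⁻¹ (w p.1) < (U (h * w⁻¹))⁻¹ (w p.2)
      by_cases hs : sameB J (w p.1) (w p.2)
      · obtain ⟨ii, hpeq⟩ := mem_PiA_iff.mp (hK hp)
        have hcons : (w⁻¹ (w p.2)).val = (w⁻¹ (w p.1)).val + 1 := by
          rw [show ∀ y, w⁻¹ (w y) = y from fun y => w.symm_apply_apply y, hpeq]
          simp [Fin.val_succ]
        have hba : (w p.2).val = (w p.1).val + 1 := adj_force hwJ hs hab hcons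
        have han : (w p.1).val < n := by
          have := (w p.2).isLt
          omega
        set jj : Fin n := ⟨(w p.1).val, han⟩ with hjj
        have hA : jj.castSucc = w p.1 := Fin.ext (by simp [hjj])
        have hB : jj.succ = w p.2 := Fin.ext (by simp [hjj, Fin.val_succ]; omega)
        have hmemJ : ((jj.castSucc, jj.succ) : RootA n) ∈ J := by
          apply mem_of_adj
          rw [hA, hB]
          exact hs
        have hpL : p ∈ LL n J K w := by
          rw [LL, Finset.mem_inter]
          refine ⟨Finset.mem_image.mpr ⟨(jj.castSucc, jj.succ), hmemJ, ?_⟩, hp⟩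
          show (w⁻¹ jj.castSucc, w⁻¹ jj.succ) = p
          rw [hA, hB, show ∀ y, w⁻¹ (w y) = y from fun y => w.symm_apply_apply y,
            show ∀ y, w⁻¹ (w y) = y from fun y => w.symm_apply_apply y]
        have hhp : h p.1 < h p.2 := hh p hpL
        refine inc_reflect (hUinc (h * w⁻¹)) ?_ ?_
        · exact sameB_trans (sameB_symm (wp_sameB hJ huc _))
            (sameB_trans hs (wp_sameB hJ huc _))
        · have hcomp : ∀ x, (h * w⁻¹ * U (h * w⁻¹)) ((U (h * w⁻¹))⁻¹ (w x)) = h x := by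
            intro x
            simp [Equiv.Perm.mul_apply]
          rw [hcomp, hcomp]
          exact hhp
      · exact cross (wp_sameB hJ huc) hab hs
    · -- left inverse
      rintro ⟨d, e⟩ hx
      obtain ⟨hd, he⟩ := Finset.mem_product.mp hx
      rw [mem_XP_iff] at hd he
      dsimp only
      have hc : d * e * ((U e⁻¹)⁻¹ * e)⁻¹ = d * U e⁻¹ := by group
      rw [hc]
      obtain ⟨h1, h2⟩ := fact_unique hJ (hUinc (d * U e⁻¹)) hd
        (inv_mem (hU (d * U e⁻¹))) (hU e⁻¹) (by group :
          d * U e⁻¹ * U (d * U e⁻¹) * (U (d * U e⁻¹))⁻¹ = d * U e⁻¹)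
      rw [h2, h1, mul_inv_cancel_left]
    · -- right inverse
      rintro ⟨w, h⟩ hx
      rw [Finset.mem_sigma] at hx
      obtain ⟨hw, hh⟩ := hx
      obtain ⟨hwJ, hwK⟩ := mem_XD_iff.mp hw
      dsimp only
      set e : WA n := (U (h * w⁻¹))⁻¹ * w with he
      have he' : e⁻¹ = w⁻¹ * U (h * w⁻¹) := by rw [he]; group
      obtain ⟨h1, h2⟩ := fact_unique hJ (hUinc e⁻¹) hwJ
        (inv_mem (hU e⁻¹)) (hU (h * w⁻¹))
        (by rw [mul_inv_cancel_right]; exact he')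
      refine Sigma.ext ?_ (heq_of_eq ?_)
      · show (U e⁻¹)⁻¹ * e = w
        rw [h2, he, mul_inv_cancel_left]
      · show h * w⁻¹ * U (h * w⁻¹) * e = h
        rw [he]
        group
    · -- summand equality
      intro x hx
      rfl
  calc xA n J * xA n K
      = ∑ x ∈ XP n J ×ˢ XP n K, MonoidAlgebra.of ℚ (WA n) (x.1 * x.2) := by
        rw [xA, xA, Finset.sum_mul_sum, Finset.sum_product]
        refine Finset.sum_congr rfl fun d _ => Finset.sum_congr rfl fun e _ => ?_
        exact (map_mul (MonoidAlgebra.of ℚ (WA n)) d e).symm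
    _ = ∑ x ∈ (XD n J K).sigma (fun w => XP n (LL n J K w)),
          MonoidAlgebra.of ℚ (WA n) x.2 := hmain
    _ = ∑ w ∈ XD n J K, xA n (LL n J K w) := by
        rw [Finset.sum_sigma]
        rfl
    _ = ∑ L ∈ K.powerset, (aC n J K L : ℚ) • xA n L := hRHS.symm
end
end

section
/- Let M, N ⊆ J ⊆ Π. Then in the rational group algebra ℚ[W] one has the relative Solomon multiplication rule inside W_J: x_M^J · x_N^J = Σ_{P ⊆ N} a^J_{MNP} · x_P^J. -/
open scoped Classical

noncomputable section

namespace SolAux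

open Finset Equiv

variable {m : ℕ}

/-- value of a permutation of `Fin m` as a function `ℕ → ℕ` (identity above `m`). -/
def fv (w : Equiv.Perm (Fin m)) (k : ℕ) : ℕ :=
  if h : k < m then (w ⟨k, h⟩ : ℕ) else k

lemma fv_lt (w : Equiv.Perm (Fin m)) {k : ℕ} (h : k < m) : fv w k < m := by
  simp only [fv, dif_pos h]; exact (w ⟨k, h⟩).isLt

lemma fv_of_lt (w : Equiv.Perm (Fin m)) {k : ℕ} (h : k < m) : fv w k = (w ⟨k, h⟩ : ℕ) := by
  simp only [fv, dif_pos h]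

lemma fv_of_ge (w : Equiv.Perm (Fin m)) {k : ℕ} (h : m ≤ k) : fv w k = k := by
  simp only [fv, dif_neg (not_lt.2 h)]

lemma fv_mul (u v : Equiv.Perm (Fin m)) (k : ℕ) : fv (u * v) k = fv u (fv v k) := by
  by_cases h : k < m
  · have h2 : fv v k < m := fv_lt v h
    rw [fv_of_lt (u * v) h, fv_of_lt u h2]
    simp only [Equiv.Perm.mul_apply]
    have hv : v ⟨k, h⟩ = ⟨fv v k, h2⟩ := Fin.ext (fv_of_lt v h).symm
    rw [hv]
  · rw [fv_of_ge _ (not_lt.1 h), fv_of_ge v (not_lt.1 h), fv_of_ge u (not_lt.1 h)]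

lemma fv_one (k : ℕ) : fv (1 : Equiv.Perm (Fin m)) k = k := by
  by_cases h : k < m
  · rw [fv_of_lt _ h]; rfl
  · exact fv_of_ge _ (not_lt.1 h)

lemma fv_inv_fv (w : Equiv.Perm (Fin m)) (k : ℕ) : fv w⁻¹ (fv w k) = k := by
  rw [← fv_mul, inv_mul_cancel, fv_one]

lemma fv_fv_inv (w : Equiv.Perm (Fin m)) (k : ℕ) : fv w (fv w⁻¹ k) = k := by
  rw [← fv_mul, mul_inv_cancel, fv_one]

lemma fv_injective (w : Equiv.Perm (Fin m)) : Function.Injective (fv w) := by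
  intro a b h
  have := congrArg (fv w⁻¹) h
  rwa [fv_inv_fv, fv_inv_fv] at this

lemma perm_ext_of_fv {w w' : Equiv.Perm (Fin m)} (h : ∀ k, k < m → fv w k = fv w' k) :
    w = w' := by
  ext x
  have := h x.1 x.2
  rw [fv_of_lt w x.2, fv_of_lt w' x.2] at this
  simpa [Fin.ext_iff] using this

/-- `x` and `y` are in the same block determined by the descent set `D`. -/
def SB (D : Finset ℕ) (x y : ℕ) : Prop :=
  ∀ k, (x ≤ k ∧ k < y) ∨ (y ≤ k ∧ k < x) → k ∈ D

lemma SB_refl (D : Finset ℕ) (x : ℕ) : SB D x x := by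
  intro k hk; exact absurd hk (by omega)

lemma SB_symm {D : Finset ℕ} {x y : ℕ} (h : SB D x y) : SB D y x := by
  intro k hk; exact h k (Or.symm hk)

lemma SB_trans {D : Finset ℕ} {x y z : ℕ} (h1 : SB D x y) (h2 : SB D y z) : SB D x z := by
  intro k hk
  rcases hk with ⟨hx, hz⟩ | ⟨hz, hx⟩
  · by_cases hy : k < y
    · exact h1 k (Or.inl ⟨hx, hy⟩)
    · exact h2 k (Or.inl ⟨not_lt.1 hy, hz⟩)
  · by_cases hy : k < y
    · exact h2 k (Or.inr ⟨hz, hy⟩)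
    · exact h1 k (Or.inr ⟨not_lt.1 hy, hx⟩)

lemma SB_mono {D D' : Finset ℕ} (hDD : D ⊆ D') {x y : ℕ} (h : SB D x y) : SB D' x y :=
  fun k hk => hDD (h k hk)

lemma SB_step {D : Finset ℕ} {k : ℕ} (h : k ∈ D) : SB D k (k + 1) := by
  intro j hj
  have : j = k := by omega
  rwa [this]

lemma mem_of_SB_step {D : Finset ℕ} {k : ℕ} (h : SB D k (k + 1)) : k ∈ D :=
  h k (Or.inl ⟨le_refl _, Nat.lt_succ_self _⟩)

lemma SB_of_between_left {D : Finset ℕ} {x y z : ℕ} (h : SB D x z) (h1 : x ≤ y) (h2 : y ≤ z) :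
    SB D x y := by
  intro k hk; exact h k (by omega)

lemma SB_of_between_right {D : Finset ℕ} {x y z : ℕ} (h : SB D x z) (h1 : x ≤ y) (h2 : y ≤ z) :
    SB D y z := by
  intro k hk; exact h k (by omega)

/-- Start of the `D`-block containing `x`: the largest block boundary `≤ x`. -/
def mstart (D : Finset ℕ) (x : ℕ) : ℕ :=
  ((Finset.range (x + 1)).filter fun y => y = 0 ∨ (y - 1) ∉ D).max'
    ⟨0, by simp⟩

lemma mstart_le (D : Finset ℕ) (x : ℕ) : mstart D x ≤ x := by
  have := Finset.max'_mem ((Finset.range (x + 1)).filter fun y => y = 0 ∨ (y - 1) ∉ D)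
    ⟨0, by simp⟩
  rw [Finset.mem_filter, Finset.mem_range] at this
  exact Nat.lt_succ_iff.mp this.1

lemma mstart_bdry (D : Finset ℕ) (x : ℕ) : mstart D x = 0 ∨ (mstart D x - 1) ∉ D := by
  have := Finset.max'_mem ((Finset.range (x + 1)).filter fun y => y = 0 ∨ (y - 1) ∉ D)
    ⟨0, by simp⟩
  rw [Finset.mem_filter] at this
  exact this.2

lemma le_mstart {D : Finset ℕ} {x b : ℕ} (hb : b ≤ x) (hbd : b = 0 ∨ (b - 1) ∉ D) :
    b ≤ mstart D x :=
  Finset.le_max' _ b (Finset.mem_filter.2 ⟨Finset.mem_range.2 (by omega), hbd⟩)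

lemma SB_mstart (D : Finset ℕ) (x : ℕ) : SB D (mstart D x) x := by
  intro k hk
  have hms := mstart_le D x
  rcases hk with ⟨h1, h2⟩ | ⟨h1, h2⟩
  · by_contra hkD
    have : k + 1 ≤ mstart D x := le_mstart (by omega) (Or.inr (by simpa using hkD))
    omega
  · omega

lemma mstart_eq_of_SB {D : Finset ℕ} {x y : ℕ} (h : SB D x y) : mstart D x = mstart D y := by
  -- both filters agree
  wlog hxy : x ≤ y generalizing x y
  · exact (this (SB_symm h) (by omega)).symm
  have hfil : (Finset.range (y + 1)).filter (fun b => b = 0 ∨ (b - 1) ∉ D) =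
      (Finset.range (x + 1)).filter (fun b => b = 0 ∨ (b - 1) ∉ D) := by
    apply Finset.ext
    intro b
    simp only [Finset.mem_filter, Finset.mem_range]
    constructor
    · rintro ⟨hb, hbd⟩
      refine ⟨?_, hbd⟩
      by_contra hbx
      have hb0 : b ≠ 0 := by omega
      have : b - 1 ∈ D := h (b - 1) (by omega)
      tauto
    · rintro ⟨hb, hbd⟩
      exact ⟨by omega, hbd⟩
  unfold mstart
  congr 1
  exact hfil.symm

lemma SB_of_mstart_eq {D : Finset ℕ} {x y : ℕ} (h : mstart D x = mstart D y) : SB D x y := by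
  have h1 := SB_mstart D x
  have h2 := SB_mstart D y
  rw [h] at h1
  exact SB_trans (SB_symm h1) h2

/-- End of the `D`-block of `x` within `range m`. -/
def mend (D : Finset ℕ) (m x : ℕ) : ℕ :=
  if h : ((Finset.range m).filter fun y => SB D x y).Nonempty
  then ((Finset.range m).filter fun y => SB D x y).max' h
  else x

lemma mend_spec {D : Finset ℕ} {x : ℕ} (hx : x < m) :
    mend D m x < m ∧ SB D x (mend D m x) ∧ x ≤ mend D m x := by
  have hne : ((Finset.range m).filter fun y => SB D x y).Nonempty :=
    ⟨x, Finset.mem_filter.2 ⟨Finset.mem_range.2 hx, SB_refl D x⟩⟩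
  have hmem := Finset.max'_mem _ hne
  rw [Finset.mem_filter, Finset.mem_range] at hmem
  have hle : x ≤ ((Finset.range m).filter fun y => SB D x y).max' hne :=
    Finset.le_max' _ x (Finset.mem_filter.2 ⟨Finset.mem_range.2 hx, SB_refl D x⟩)
  rw [mend, dif_pos hne]
  exact ⟨hmem.1, hmem.2, hle⟩

lemma le_mend {D : Finset ℕ} {x y : ℕ} (hy : y < m) (h : SB D x y) : y ≤ mend D m x := by
  have hne : ((Finset.range m).filter fun y => SB D x y).Nonempty :=
    ⟨y, Finset.mem_filter.2 ⟨Finset.mem_range.2 hy, h⟩⟩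
  rw [mend, dif_pos hne]
  exact Finset.le_max' _ y (Finset.mem_filter.2 ⟨Finset.mem_range.2 hy, h⟩)

lemma SB_iff_Icc {D : Finset ℕ} {x y : ℕ} (hx : x < m) :
    (y < m ∧ SB D x y) ↔ (mstart D x ≤ y ∧ y ≤ mend D m x) := by
  obtain ⟨he1, he2, he3⟩ := mend_spec (D := D) hx
  constructor
  · rintro ⟨hy, h⟩
    constructor
    · rw [mstart_eq_of_SB h]; exact mstart_le D y
    · exact le_mend hy h
  · rintro ⟨h1, h2⟩
    refine ⟨by omega, ?_⟩
    rcases le_or_gt y x with hyx | hyx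
    · exact SB_symm (SB_of_between_right (SB_mstart D x) h1 hyx)
    · exact SB_of_between_left he2 (by omega) h2


/-! ### increasing / block-preserving permutations -/

/-- `w` is increasing at every descent position in `D`. -/
def IncOn (D : Finset ℕ) (w : Equiv.Perm (Fin m)) : Prop := ∀ k ∈ D, fv w k < fv w (k + 1)

/-- `w` preserves every `D`-block. -/
def BP (D : Finset ℕ) (w : Equiv.Perm (Fin m)) : Prop := ∀ j, SB D j (fv w j)

lemma BP_one (D : Finset ℕ) : BP D (1 : Equiv.Perm (Fin m)) := fun j => by
  rw [fv_one]; exact SB_refl D j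

lemma BP_mul {D : Finset ℕ} {u v : Equiv.Perm (Fin m)} (hu : BP D u) (hv : BP D v) :
    BP D (u * v) := fun j => by
  rw [fv_mul]; exact SB_trans (hv j) (hu (fv v j))

lemma BP_inv {D : Finset ℕ} {w : Equiv.Perm (Fin m)} (hw : BP D w) : BP D w⁻¹ := fun j => by
  have := hw (fv w⁻¹ j)
  rw [fv_fv_inv] at this
  exact SB_symm this

lemma IncOn_SB {D : Finset ℕ} {u : Equiv.Perm (Fin m)} (hu : IncOn D u) :
    ∀ b a, SB D a b → a < b → fv u a < fv u b := by
  intro b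
  induction b using Nat.strong_induction_on with
  | _ b ih =>
    intro a hab hlt
    rcases eq_or_lt_of_le (Nat.succ_le_of_lt hlt) with h | h
    · have ha : a ∈ D := hab a (Or.inl ⟨le_refl _, hlt⟩)
      have := hu a ha
      have hb : a + 1 = b := h
      rw [← hb]
      exact this
    · have hb1 : b - 1 ∈ D := hab (b - 1) (Or.inl ⟨by omega, by omega⟩)
      have h1 : fv u a < fv u (b - 1) :=
        ih (b - 1) (by omega) a (SB_of_between_left hab (by omega) (by omega)) (by omega)
      have h2 := hu (b - 1) hb1
      have hb : b - 1 + 1 = b := by omega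
      rw [hb] at h2
      omega

lemma IncOn_lt_iff {D : Finset ℕ} {u : Equiv.Perm (Fin m)} (hu : IncOn D u) {a b : ℕ}
    (hab : SB D a b) : fv u a < fv u b ↔ a < b := by
  constructor
  · intro h
    rcases lt_trichotomy a b with h' | h' | h'
    · exact h'
    · rw [h'] at h; omega
    · have := IncOn_SB hu a b (SB_symm hab) h'
      omega
  · exact IncOn_SB hu b a hab

/-! ### inversions -/

/-- The set of inversions of `w`. -/
def invs (w : Equiv.Perm (Fin m)) : Finset (ℕ × ℕ) :=
  ((Finset.range m) ×ˢ (Finset.range m)).filter fun p => p.1 < p.2 ∧ fv w p.2 < fv w p.1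

lemma mem_invs {w : Equiv.Perm (Fin m)} {p : ℕ × ℕ} :
    p ∈ invs w ↔ (p.1 < m ∧ p.2 < m) ∧ p.1 < p.2 ∧ fv w p.2 < fv w p.1 := by
  simp [invs, Finset.mem_filter, Finset.mem_product]

lemma eq_one_of_invs_empty {w : Equiv.Perm (Fin m)} (h : invs w = ∅) : w = 1 := by
  have hmono : ∀ a b, a < b → b < m → fv w a < fv w b := by
    intro a b hab hb
    have hnot : (a, b) ∉ invs w := by rw [h]; exact Finset.notMem_empty _
    rw [mem_invs] at hnot
    push_neg at hnot
    dsimp only at hnot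
    have hne : fv w a ≠ fv w b := fun hh => by
      have := fv_injective w hh; omega
    have := hnot ⟨by omega, hb⟩ hab
    omega
  have hge : ∀ j, j < m → j ≤ fv w j := by
    intro j
    induction j using Nat.strong_induction_on with
    | _ j ih =>
      intro hj
      rcases Nat.eq_zero_or_pos j with h0 | h0
      · omega
      · have h1 := ih (j - 1) (by omega) (by omega)
        have h2 := hmono (j - 1) j (by omega) hj
        omega
  have hsum : ∑ j ∈ Finset.range m, fv w j = ∑ j ∈ Finset.range m, j := by
    apply Finset.sum_nbij' (fun j => fv w j) (fun j => fv w⁻¹ j)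
    · intro a ha; exact Finset.mem_range.2 (fv_lt w (Finset.mem_range.1 ha))
    · intro a ha; exact Finset.mem_range.2 (fv_lt w⁻¹ (Finset.mem_range.1 ha))
    · intro a _; exact fv_inv_fv w a
    · intro a _; exact fv_fv_inv w a
    · intro a _; rfl
  have heq : ∀ j ∈ Finset.range m, fv w j = j := by
    intro j hj
    have := (Finset.sum_eq_sum_iff_of_le (fun i hi => hge i (Finset.mem_range.1 hi))).mp
      hsum.symm j hj
    omega
  apply perm_ext_of_fv
  intro k hk
  rw [fv_one]
  exact heq k (Finset.mem_range.2 hk)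

lemma exists_descent {w : Equiv.Perm (Fin m)} (h : (invs w).Nonempty) :
    ∃ k, k + 1 < m ∧ fv w (k + 1) < fv w k := by
  by_contra hc
  push_neg at hc
  obtain ⟨p, hp⟩ := h
  rw [mem_invs] at hp
  have hIncOn : IncOn (Finset.range (m - 1)) w := by
    intro k hk
    rw [Finset.mem_range] at hk
    have h1 := hc k (by omega)
    have hne : fv w k ≠ fv w (k + 1) := fun hh => by
      have := fv_injective w hh; omega
    omega
  have := IncOn_SB hIncOn p.2 p.1 (fun k hk => Finset.mem_range.2 (by omega)) hp.2.1
  omega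

/-- the adjacent "swap positions `k`, `k+1`" map on `ℕ`. -/
def sg (k j : ℕ) : ℕ := if j = k then k + 1 else if j = k + 1 then k else j

lemma sg_self (k : ℕ) : sg k k = k + 1 := by simp [sg]

lemma sg_succ (k : ℕ) : sg k (k + 1) = k := by
  rw [sg, if_neg (by omega), if_pos rfl]

lemma sg_other {k j : ℕ} (h1 : j ≠ k) (h2 : j ≠ k + 1) : sg k j = j := by
  rw [sg, if_neg h1, if_neg h2]

lemma sg_cases (k j : ℕ) : sg k j = k + 1 ∧ j = k ∨ sg k j = k ∧ j = k + 1 ∨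
    sg k j = j ∧ j ≠ k ∧ j ≠ k + 1 := by
  rcases eq_or_ne j k with rfl | h1
  · exact Or.inl ⟨sg_self j, rfl⟩
  · rcases eq_or_ne j (k + 1) with rfl | h2
    · exact Or.inr (Or.inl ⟨sg_succ k, rfl⟩)
    · exact Or.inr (Or.inr ⟨sg_other h1 h2, h1, h2⟩)

lemma sg_invol (k j : ℕ) : sg k (sg k j) = j := by
  rcases sg_cases k j with ⟨h, rfl⟩ | ⟨h, rfl⟩ | ⟨h, _, _⟩
  · rw [h, sg_succ]
  · rw [h, sg_self]
  · rw [h, h]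

lemma sg_lt {k j : ℕ} (hj : j < m) (hk : k + 1 < m) : sg k j < m := by
  rcases sg_cases k j with ⟨h, rfl⟩ | ⟨h, rfl⟩ | ⟨h, _, _⟩ <;> rw [h] <;> omega

lemma sg_lt_sg {k a b : ℕ} (hab : a < b) (hne : ¬(a = k ∧ b = k + 1)) : sg k a < sg k b := by
  rcases sg_cases k a with ⟨ha, ha'⟩ | ⟨ha, ha'⟩ | ⟨ha, ha1, ha2⟩ <;>
    rcases sg_cases k b with ⟨hb, hb'⟩ | ⟨hb, hb'⟩ | ⟨hb, hb1, hb2⟩ <;>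
      rw [ha, hb] <;> omega

lemma fv_swap {k : ℕ} (h1 : k < m) (h2 : k + 1 < m) (j : ℕ) :
    fv (Equiv.swap (⟨k, h1⟩ : Fin m) ⟨k + 1, h2⟩) j = sg k j := by
  by_cases hj : j < m
  · rw [fv_of_lt _ hj]
    by_cases hk : j = k
    · have he : (⟨j, hj⟩ : Fin m) = ⟨k, h1⟩ := Fin.ext hk
      rw [he, Equiv.swap_apply_left, hk]
      exact (sg_self k).symm
    · by_cases hk1 : j = k + 1
      · have he : (⟨j, hj⟩ : Fin m) = ⟨k + 1, h2⟩ := Fin.ext hk1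
        rw [he, Equiv.swap_apply_right, hk1]
        exact (sg_succ k).symm
      · rw [Equiv.swap_apply_of_ne_of_ne (fun hh => hk (by simpa [Fin.ext_iff] using hh))
          (fun hh => hk1 (by simpa [Fin.ext_iff] using hh))]
        exact (sg_other hk hk1).symm
  · rw [fv_of_ge _ (not_lt.1 hj)]
    exact (sg_other (by omega) (by omega)).symm

lemma fv_mul_swap {w : Equiv.Perm (Fin m)} {k : ℕ} (h1 : k < m) (h2 : k + 1 < m) (j : ℕ) :
    fv (w * Equiv.swap (⟨k, h1⟩ : Fin m) ⟨k + 1, h2⟩) j = fv w (sg k j) := by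
  rw [fv_mul, fv_swap h1 h2]

lemma invs_card_swap {w : Equiv.Perm (Fin m)} {k : ℕ} (h2 : k + 1 < m)
    (hd : fv w (k + 1) < fv w k) :
    (invs (w * Equiv.swap (⟨k, by omega⟩ : Fin m) ⟨k + 1, h2⟩)).card < (invs w).card := by
  have h1 : k < m := by omega
  set s := Equiv.swap (⟨k, h1⟩ : Fin m) ⟨k + 1, h2⟩ with hs
  have hfv : ∀ j, fv (w * s) j = fv w (sg k j) := fun j => fv_mul_swap h1 h2 j
  have hmem : (k, k + 1) ∈ invs w := mem_invs.2 ⟨⟨h1, h2⟩, by omega, hd⟩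
  have hsub : ∀ p ∈ invs (w * s), (sg k p.1, sg k p.2) ∈ (invs w).erase (k, k + 1) := by
    intro p hp
    rw [mem_invs] at hp
    obtain ⟨⟨hp1, hp2⟩, hplt, hpinv⟩ := hp
    rw [hfv, hfv] at hpinv
    have hne : ¬(p.1 = k ∧ p.2 = k + 1) := by
      rintro ⟨e1, e2⟩
      rw [e1, e2, sg_self, sg_succ] at hpinv
      omega
    refine Finset.mem_erase.2 ⟨?_, mem_invs.2 ⟨⟨sg_lt hp1 h2, sg_lt hp2 h2⟩, sg_lt_sg hplt hne, hpinv⟩⟩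
    intro hcon
    have e1 : sg k p.1 = k := congrArg Prod.fst hcon
    have e2 : sg k p.2 = k + 1 := congrArg Prod.snd hcon
    have f1 := sg_invol k p.1
    rw [e1, sg_self] at f1
    have f2 := sg_invol k p.2
    rw [e2, sg_succ] at f2
    omega
  have hcard : (invs (w * s)).card ≤ ((invs w).erase (k, k + 1)).card := by
    apply Finset.card_le_card_of_injOn (fun p => (sg k p.1, sg k p.2)) (fun p hp => hsub p hp)
    intro p _ q _ hpq
    have e1 : sg k p.1 = sg k q.1 := congrArg Prod.fst hpq
    have e2 : sg k p.2 = sg k q.2 := congrArg Prod.snd hpq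
    have f1 : p.1 = q.1 := by rw [← sg_invol k p.1, e1, sg_invol]
    have f2 : p.2 = q.2 := by rw [← sg_invol k p.2, e2, sg_invol]
    exact Prod.ext f1 f2
  have := Finset.card_erase_of_mem hmem
  have hpos : 0 < (invs w).card := Finset.card_pos.2 ⟨_, hmem⟩
  omega

lemma BP_mem_closure {D : Finset ℕ} (hD : ∀ k ∈ D, k + 1 < m) {G : Set (Equiv.Perm (Fin m))}
    (hG : ∀ k, k ∈ D → ∀ (g1 : k < m) (g2 : k + 1 < m),
      Equiv.swap (⟨k, g1⟩ : Fin m) ⟨k + 1, g2⟩ ∈ G) :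
    ∀ c (w : Equiv.Perm (Fin m)), (invs w).card = c → BP D w → w ∈ Subgroup.closure G := by
  intro c
  induction c using Nat.strong_induction_on with
  | _ c ih =>
    intro w hc hw
    rcases eq_or_ne (invs w) ∅ with h0 | h0
    · rw [eq_one_of_invs_empty h0]
      exact one_mem _
    · obtain ⟨k, hk2, hd⟩ := exists_descent (Finset.nonempty_iff_ne_empty.2 h0)
      have hk1 : k < m := by omega
      have hkD : k ∈ D := by
        by_contra hkD
        have h1 := hw k
        have h2 := hw (k + 1)
        have e1 : fv w k ≤ k := by
          by_contra hh
          exact hkD (h1 k (Or.inl ⟨le_refl _, by omega⟩))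
        have e2 : k + 1 ≤ fv w (k + 1) := by
          by_contra hh
          exact hkD (h2 k (Or.inr ⟨by omega, by omega⟩))
        omega
      set s := Equiv.swap (⟨k, hk1⟩ : Fin m) ⟨k + 1, hk2⟩ with hsdef
      have hcard := invs_card_swap hk2 hd
      have hBP' : BP D (w * s) := by
        intro j
        rw [fv_mul_swap hk1 hk2]
        have hSB : SB D j (sg k j) := by
          rcases eq_or_ne j k with rfl | e1
          · rw [sg_self]
            exact SB_step hkD
          · rcases eq_or_ne j (k + 1) with rfl | e2
            · rw [sg_succ]
              exact SB_symm (SB_step hkD)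
            · rw [sg_other e1 e2]
              exact SB_refl D j
        exact SB_trans hSB (hw (sg k j))
      have hmem' : w * s ∈ Subgroup.closure G :=
        ih _ (hc ▸ hcard) (w * s) rfl hBP'
      have hsmem : s ∈ Subgroup.closure G := Subgroup.subset_closure (hG k hkD hk1 hk2)
      have hws : w = (w * s) * s := by
        rw [mul_assoc, hsdef, Equiv.swap_mul_self, mul_one]
      rw [hws]
      exact mul_mem hmem' hsmem


/-! ### the core maps `phi` and `psi` -/

lemma card_filter_fv (w : Equiv.Perm (Fin m)) (Q : ℕ → Prop) [DecidablePred Q] :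
    ((Finset.range m).filter fun j => Q (fv w j)).card = ((Finset.range m).filter Q).card := by
  apply Finset.card_bij (fun j _ => fv w j)
  · intro a ha
    rw [Finset.mem_filter] at ha ⊢
    exact ⟨Finset.mem_range.2 (fv_lt w (Finset.mem_range.1 ha.1)), ha.2⟩
  · intro a _ b _ h
    exact fv_injective w h
  · intro b hb
    rw [Finset.mem_filter] at hb
    refine ⟨fv w⁻¹ b, Finset.mem_filter.2 ⟨Finset.mem_range.2 (fv_lt _ (Finset.mem_range.1 hb.1)), ?_⟩,
      fv_fv_inv w b⟩
    rw [fv_fv_inv]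
    exact hb.2

variable (DM : Finset ℕ)

lemma blk_filter_eq {x : ℕ} (hx : x < m) :
    ((Finset.range m).filter fun y => mstart DM y = mstart DM x) =
      Finset.Icc (mstart DM x) (mend DM m x) := by
  ext y
  simp only [Finset.mem_filter, Finset.mem_range, Finset.mem_Icc]
  rw [← SB_iff_Icc hx]
  constructor
  · rintro ⟨h1, h2⟩
    exact ⟨h1, SB_of_mstart_eq h2.symm⟩
  · rintro ⟨h1, h2⟩
    exact ⟨h1, (mstart_eq_of_SB h2).symm⟩

lemma mend_lt_mstart {a b : ℕ} (ha : a < m) (hab : a < b) (h : ¬ SB DM a b) :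
    mend DM m a < mstart DM b := by
  rw [SB] at h
  push_neg at h
  obtain ⟨k, hk, hkD⟩ := h
  have hk' : a ≤ k ∧ k < b := by rcases hk with h | h <;> omega
  have h1 : mend DM m a ≤ k := by
    by_contra hh
    exact hkD ((mend_spec ha).2.1 k (Or.inl ⟨hk'.1, by omega⟩))
  have h2 : k + 1 ≤ mstart DM b := le_mstart (by omega) (Or.inr (by simpa using hkD))
  omega

/-- the explicit formula underlying the distinguished double coset representative
attached to `v`. -/
def gphi (v : Equiv.Perm (Fin m)) (j : ℕ) : ℕ :=
  if j < m then mstart DM (fv v j) +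
    ((Finset.range j).filter fun i => mstart DM (fv v i) = mstart DM (fv v j)).card
  else j

/-- the explicit formula underlying the second component of the inverse map. -/
def gpsi (d e : Equiv.Perm (Fin m)) (j : ℕ) : ℕ :=
  if j < m then mstart DM (fv d j) +
    ((Finset.range m).filter fun i =>
      mstart DM (fv d i) = mstart DM (fv d j) ∧ fv e i < fv e j).card
  else j

lemma gphi_bounds {v : Equiv.Perm (Fin m)} {j : ℕ} (hj : j < m) :
    mstart DM (fv v j) ≤ gphi DM v j ∧ gphi DM v j ≤ mend DM m (fv v j) := by
  rw [gphi, if_pos hj]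
  refine ⟨Nat.le_add_right _ _, ?_⟩
  have hvj : fv v j < m := fv_lt v hj
  have hsub : ((Finset.range j).filter fun i => mstart DM (fv v i) = mstart DM (fv v j)) ⊆
      ((Finset.range m).filter fun i => mstart DM (fv v i) = mstart DM (fv v j)).erase j := by
    intro i hi
    rw [Finset.mem_filter, Finset.mem_range] at hi
    refine Finset.mem_erase.2 ⟨by omega, Finset.mem_filter.2 ⟨Finset.mem_range.2 (by omega), hi.2⟩⟩
  have hjmem : j ∈ (Finset.range m).filter fun i => mstart DM (fv v i) = mstart DM (fv v j) :=
    Finset.mem_filter.2 ⟨Finset.mem_range.2 hj, rfl⟩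
  have h1 := Finset.card_le_card hsub
  rw [Finset.card_erase_of_mem hjmem] at h1
  have h2 : ((Finset.range m).filter fun i => mstart DM (fv v i) = mstart DM (fv v j)).card =
      mend DM m (fv v j) + 1 - mstart DM (fv v j) := by
    have hc := card_filter_fv v (fun y => mstart DM y = mstart DM (fv v j))
    have hc2 : ((Finset.range m).filter fun y => mstart DM y = mstart DM (fv v j)).card =
        mend DM m (fv v j) + 1 - mstart DM (fv v j) := by
      rw [blk_filter_eq DM hvj, Nat.card_Icc]
    exact hc.trans hc2
  have h3 := (mend_spec (D := DM) hvj).2.2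
  have h4 := mstart_le DM (fv v j)
  omega

lemma gphi_blk {v : Equiv.Perm (Fin m)} {j : ℕ} (hj : j < m) :
    gphi DM v j < m ∧ mstart DM (gphi DM v j) = mstart DM (fv v j) := by
  have hb := gphi_bounds DM (v := v) hj
  have hvj : fv v j < m := fv_lt v hj
  have : gphi DM v j ∈ Finset.Icc (mstart DM (fv v j)) (mend DM m (fv v j)) :=
    Finset.mem_Icc.2 hb
  rw [← blk_filter_eq DM hvj, Finset.mem_filter, Finset.mem_range] at this
  exact this

lemma gphi_inj {v : Equiv.Perm (Fin m)} :
    ∀ {j j' : ℕ}, j < m → j' < m → gphi DM v j = gphi DM v j' → j = j' := by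
  have key : ∀ {j j' : ℕ}, j < m → j' < m → gphi DM v j = gphi DM v j' → j < j' → False := by
    intro j j' hj hj' h hlt
    have hs : mstart DM (fv v j) = mstart DM (fv v j') := by
      rw [← (gphi_blk DM hj).2, ← (gphi_blk DM hj').2, h]
    rw [gphi, if_pos hj, gphi, if_pos hj'] at h
    have hsub : insert j ((Finset.range j).filter fun i =>
        mstart DM (fv v i) = mstart DM (fv v j')) ⊆
        (Finset.range j').filter fun i => mstart DM (fv v i) = mstart DM (fv v j') := by
      intro i hi
      rcases Finset.mem_insert.1 hi with rfl | hi
      · exact Finset.mem_filter.2 ⟨Finset.mem_range.2 hlt, hs⟩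
      · rw [Finset.mem_filter, Finset.mem_range] at hi ⊢
        exact ⟨by omega, hi.2⟩
    have hcard := Finset.card_le_card hsub
    rw [Finset.card_insert_of_notMem (fun hh => by
      rw [Finset.mem_filter, Finset.mem_range] at hh; omega)] at hcard
    rw [hs] at h
    omega
  intro j j' hj hj' h
  rcases lt_trichotomy j j' with hlt | he | hlt
  · exact absurd (key hj hj' h hlt) (fun f => f)
  · exact he
  · exact absurd (key hj' hj h.symm hlt) (fun f => f)

lemma gpsi_bounds {d e : Equiv.Perm (Fin m)} {j : ℕ} (hj : j < m) :
    mstart DM (fv d j) ≤ gpsi DM d e j ∧ gpsi DM d e j ≤ mend DM m (fv d j) := by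
  rw [gpsi, if_pos hj]
  refine ⟨Nat.le_add_right _ _, ?_⟩
  have hvj : fv d j < m := fv_lt d hj
  have hsub : ((Finset.range m).filter fun i =>
      mstart DM (fv d i) = mstart DM (fv d j) ∧ fv e i < fv e j) ⊆
      ((Finset.range m).filter fun i => mstart DM (fv d i) = mstart DM (fv d j)).erase j := by
    intro i hi
    rw [Finset.mem_filter] at hi
    refine Finset.mem_erase.2 ⟨fun hh => ?_, Finset.mem_filter.2 ⟨hi.1, hi.2.1⟩⟩
    rw [hh] at hi
    omega
  have hjmem : j ∈ (Finset.range m).filter fun i => mstart DM (fv d i) = mstart DM (fv d j) :=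
    Finset.mem_filter.2 ⟨Finset.mem_range.2 hj, rfl⟩
  have h1 := Finset.card_le_card hsub
  rw [Finset.card_erase_of_mem hjmem] at h1
  have h2 : ((Finset.range m).filter fun i => mstart DM (fv d i) = mstart DM (fv d j)).card =
      mend DM m (fv d j) + 1 - mstart DM (fv d j) := by
    have hc := card_filter_fv d (fun y => mstart DM y = mstart DM (fv d j))
    have hc2 : ((Finset.range m).filter fun y => mstart DM y = mstart DM (fv d j)).card =
        mend DM m (fv d j) + 1 - mstart DM (fv d j) := by
      rw [blk_filter_eq DM hvj, Nat.card_Icc]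
    exact hc.trans hc2
  have h3 := (mend_spec (D := DM) hvj).2.2
  have h4 := mstart_le DM (fv d j)
  omega

lemma gpsi_blk {d e : Equiv.Perm (Fin m)} {j : ℕ} (hj : j < m) :
    gpsi DM d e j < m ∧ mstart DM (gpsi DM d e j) = mstart DM (fv d j) := by
  have hb := gpsi_bounds DM (d := d) (e := e) hj
  have hvj : fv d j < m := fv_lt d hj
  have : gpsi DM d e j ∈ Finset.Icc (mstart DM (fv d j)) (mend DM m (fv d j)) :=
    Finset.mem_Icc.2 hb
  rw [← blk_filter_eq DM hvj, Finset.mem_filter, Finset.mem_range] at this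
  exact this

lemma gpsi_inj {d e : Equiv.Perm (Fin m)} :
    ∀ {j j' : ℕ}, j < m → j' < m → gpsi DM d e j = gpsi DM d e j' → j = j' := by
  have key : ∀ {j j' : ℕ}, j < m → j' < m → gpsi DM d e j = gpsi DM d e j' →
      fv e j < fv e j' → False := by
    intro j j' hj hj' h hlt
    have hs : mstart DM (fv d j) = mstart DM (fv d j') := by
      rw [← (gpsi_blk DM hj).2, ← (gpsi_blk DM hj').2, h]
    rw [gpsi, if_pos hj, gpsi, if_pos hj'] at h
    have hsub : insert j ((Finset.range m).filter fun i =>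
        mstart DM (fv d i) = mstart DM (fv d j') ∧ fv e i < fv e j) ⊆
        (Finset.range m).filter fun i =>
          mstart DM (fv d i) = mstart DM (fv d j') ∧ fv e i < fv e j' := by
      intro i hi
      rcases Finset.mem_insert.1 hi with rfl | hi
      · exact Finset.mem_filter.2 ⟨Finset.mem_range.2 hj, hs, hlt⟩
      · rw [Finset.mem_filter] at hi ⊢
        exact ⟨hi.1, hi.2.1, by omega⟩
    have hcard := Finset.card_le_card hsub
    rw [Finset.card_insert_of_notMem (fun hh => by
      rw [Finset.mem_filter] at hh; omega)] at hcard
    rw [hs] at h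
    omega
  intro j j' hj hj' h
  rcases lt_trichotomy (fv e j) (fv e j') with hlt | he | hlt
  · exact absurd (key hj hj' h hlt) (fun f => f)
  · exact fv_injective e he
  · exact absurd (key hj' hj h.symm hlt) (fun f => f)

/-- The distinguished double coset representative attached to `v`. -/
def phi (v : Equiv.Perm (Fin m)) : Equiv.Perm (Fin m) :=
  Equiv.ofBijective (fun x : Fin m => (⟨gphi DM v x.1, (gphi_blk DM x.2).1⟩ : Fin m))
    (Finite.injective_iff_bijective.mp fun a b hab =>
      Fin.ext (gphi_inj DM a.2 b.2 (by simpa [Fin.ext_iff] using hab)))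

/-- The second component of the inverse of the Solomon bijection. -/
def psi (d e : Equiv.Perm (Fin m)) : Equiv.Perm (Fin m) :=
  Equiv.ofBijective (fun x : Fin m => (⟨gpsi DM d e x.1, (gpsi_blk DM x.2).1⟩ : Fin m))
    (Finite.injective_iff_bijective.mp fun a b hab =>
      Fin.ext (gpsi_inj DM a.2 b.2 (by simpa [Fin.ext_iff] using hab)))

lemma fv_phi_eq (v : Equiv.Perm (Fin m)) (j : ℕ) : fv (phi DM v) j = gphi DM v j := by
  by_cases hj : j < m
  · rw [fv_of_lt _ hj]; rfl
  · rw [fv_of_ge _ (not_lt.1 hj), gphi, if_neg hj]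

lemma fv_psi_eq (d e : Equiv.Perm (Fin m)) (j : ℕ) : fv (psi DM d e) j = gpsi DM d e j := by
  by_cases hj : j < m
  · rw [fv_of_lt _ hj]; rfl
  · rw [fv_of_ge _ (not_lt.1 hj), gpsi, if_neg hj]

variable {DN DJ : Finset ℕ}

/-- `ℕ`-level version of the set `d⁻¹(M) ∩ N`. -/
def PD (DM DN : Finset ℕ) (d : Equiv.Perm (Fin m)) : Finset ℕ :=
  DN.filter fun k => fv d k ∈ DM ∧ fv d (k + 1) = fv d k + 1

lemma phi_incN {v : Equiv.Perm (Fin m)} (hv1 : IncOn DN v)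
    (hNJ : DN ⊆ DJ) (hDJ : ∀ k ∈ DJ, k + 1 < m) : IncOn DN (phi DM v) := by
  intro k hk
  have hk1 : k + 1 < m := hDJ k (hNJ hk)
  have hk0 : k < m := by omega
  rw [fv_phi_eq, fv_phi_eq]
  by_cases hs : mstart DM (fv v k) = mstart DM (fv v (k + 1))
  · rw [gphi, if_pos hk0, gphi, if_pos hk1, hs]
    have hsub : insert k ((Finset.range k).filter fun i =>
        mstart DM (fv v i) = mstart DM (fv v (k + 1))) ⊆
        (Finset.range (k + 1)).filter fun i =>
          mstart DM (fv v i) = mstart DM (fv v (k + 1)) := by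
      intro i hi
      rcases Finset.mem_insert.1 hi with rfl | hi
      · exact Finset.mem_filter.2 ⟨Finset.mem_range.2 (by omega), hs⟩
      · rw [Finset.mem_filter, Finset.mem_range] at hi ⊢
        exact ⟨by omega, hi.2⟩
    have hcard := Finset.card_le_card hsub
    rw [Finset.card_insert_of_notMem (fun hh => by
      rw [Finset.mem_filter, Finset.mem_range] at hh; omega)] at hcard
    omega
  · have hlt : fv v k < fv v (k + 1) := hv1 k hk
    have hord := mend_lt_mstart DM (fv_lt v hk0) hlt (fun h => hs (mstart_eq_of_SB h))
    have hub := (gphi_bounds DM (v := v) hk0).2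
    have hlb := (gphi_bounds DM (v := v) hk1).1
    omega

lemma phi_incM_inv {v : Equiv.Perm (Fin m)} (hMJ : DM ⊆ DJ) (hDJ : ∀ k ∈ DJ, k + 1 < m) :
    IncOn DM (phi DM v)⁻¹ := by
  intro l hl
  have hl1 : l + 1 < m := hDJ l (hMJ hl)
  have hl0 : l < m := by omega
  set j := fv (phi DM v)⁻¹ l with hjdef
  set j2 := fv (phi DM v)⁻¹ (l + 1) with hj2def
  have hjm : j < m := fv_lt _ hl0
  have hj2m : j2 < m := fv_lt _ hl1
  have e1 : gphi DM v j = l := by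
    rw [← fv_phi_eq, hjdef, fv_fv_inv]
  have e2 : gphi DM v j2 = l + 1 := by
    rw [← fv_phi_eq, hj2def, fv_fv_inv]
  have hs : mstart DM (fv v j) = mstart DM (fv v j2) := by
    rw [← (gphi_blk DM hjm).2, ← (gphi_blk DM hj2m).2, e1, e2]
    exact mstart_eq_of_SB (SB_step hl)
  show j < j2
  by_contra hcon
  push_neg at hcon
  rw [gphi, if_pos hjm] at e1
  rw [gphi, if_pos hj2m] at e2
  rw [hs] at e1
  have hsub : ((Finset.range j2).filter fun i =>
      mstart DM (fv v i) = mstart DM (fv v j2)) ⊆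
      (Finset.range j).filter fun i => mstart DM (fv v i) = mstart DM (fv v j2) :=
    Finset.filter_subset_filter _ (Finset.range_subset_range.2 hcon)
  have hcard := Finset.card_le_card hsub
  omega

lemma phi_BP {v : Equiv.Perm (Fin m)} (hv2 : BP DJ v) (hMJ : DM ⊆ DJ) : BP DJ (phi DM v) := by
  intro j
  rw [fv_phi_eq]
  by_cases hj : j < m
  · have h2 : SB DM (fv v j) (gphi DM v j) := SB_of_mstart_eq ((gphi_blk DM hj).2).symm
    exact SB_trans (hv2 j) (SB_mono hMJ h2)
  · rw [gphi, if_neg hj]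
    exact SB_refl _ _

lemma phi_P_inc {u v : Equiv.Perm (Fin m)} (hu1 : IncOn DM u) (hv1 : IncOn DN v)
    (hNJ : DN ⊆ DJ) (hDJ : ∀ k ∈ DJ, k + 1 < m) :
    IncOn (PD DM DN (phi DM v)) (u * v) := by
  intro k hk
  rw [PD, Finset.mem_filter] at hk
  obtain ⟨hkN, hdm, hcons⟩ := hk
  have hk1 : k + 1 < m := hDJ k (hNJ hkN)
  have hk0 : k < m := by omega
  rw [fv_mul, fv_mul]
  have hs1 : mstart DM (fv v k) = mstart DM (fv (phi DM v) k) := by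
    rw [fv_phi_eq]; exact ((gphi_blk DM hk0).2).symm
  have hs2 : mstart DM (fv v (k + 1)) = mstart DM (fv (phi DM v) (k + 1)) := by
    rw [fv_phi_eq]; exact ((gphi_blk DM hk1).2).symm
  have hsmid : mstart DM (fv (phi DM v) k) = mstart DM (fv (phi DM v) (k + 1)) := by
    rw [hcons]
    exact mstart_eq_of_SB (SB_step hdm)
  have hSB : SB DM (fv v k) (fv v (k + 1)) := by
    apply SB_of_mstart_eq
    rw [hs1, hs2, hsmid]
  exact IncOn_SB hu1 _ _ hSB (hv1 k hkN)

lemma consec {d : Equiv.Perm (Fin m)} (hd1 : IncOn DN d) (hd2 : IncOn DM d⁻¹) {k : ℕ}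
    (hk : k ∈ DN) (hSB : SB DM (fv d k) (fv d (k + 1))) :
    fv d (k + 1) = fv d k + 1 := by
  have hlt : fv d k < fv d (k + 1) := hd1 k hk
  rcases eq_or_lt_of_le (Nat.succ_le_of_lt hlt) with h | h
  · exact h.symm
  · exfalso
    have hmem : fv d k ∈ DM := hSB (fv d k) (Or.inl ⟨le_refl _, hlt⟩)
    have h1 := hd2 _ hmem
    have h2 : fv d⁻¹ (fv d k + 1) < fv d⁻¹ (fv d (k + 1)) :=
      IncOn_SB hd2 _ _ (SB_of_between_right hSB (by omega) (by omega)) h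
    rw [fv_inv_fv] at h1
    rw [fv_inv_fv] at h2
    omega

lemma psi_incN {d e : Equiv.Perm (Fin m)} (hd1 : IncOn DN d) (hd2 : IncOn DM d⁻¹)
    (he1 : IncOn (PD DM DN d) e) (hNJ : DN ⊆ DJ) (hDJ : ∀ k ∈ DJ, k + 1 < m) :
    IncOn DN (psi DM d e) := by
  intro k hk
  have hk1 : k + 1 < m := hDJ k (hNJ hk)
  have hk0 : k < m := by omega
  rw [fv_psi_eq, fv_psi_eq]
  by_cases hs : mstart DM (fv d k) = mstart DM (fv d (k + 1))
  · have hcons := consec DM hd1 hd2 hk (SB_of_mstart_eq hs)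
    have hdm : fv d k ∈ DM := by
      have h := SB_of_mstart_eq hs
      rw [hcons] at h
      exact mem_of_SB_step h
    have hkP : k ∈ PD DM DN d := Finset.mem_filter.2 ⟨hk, hdm, hcons⟩
    have hew : fv e k < fv e (k + 1) := he1 k hkP
    rw [gpsi, if_pos hk0, gpsi, if_pos hk1, hs]
    have hsub : insert k ((Finset.range m).filter fun i =>
        mstart DM (fv d i) = mstart DM (fv d (k + 1)) ∧ fv e i < fv e k) ⊆
        (Finset.range m).filter fun i =>
          mstart DM (fv d i) = mstart DM (fv d (k + 1)) ∧ fv e i < fv e (k + 1) := by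
      intro i hi
      rcases Finset.mem_insert.1 hi with rfl | hi
      · exact Finset.mem_filter.2 ⟨Finset.mem_range.2 hk0, hs, hew⟩
      · rw [Finset.mem_filter] at hi ⊢
        exact ⟨hi.1, hi.2.1, by omega⟩
    have hcard := Finset.card_le_card hsub
    rw [Finset.card_insert_of_notMem (fun hh => by
      rw [Finset.mem_filter] at hh; omega)] at hcard
    omega
  · have hlt : fv d k < fv d (k + 1) := hd1 k hk
    have hord := mend_lt_mstart DM (fv_lt d hk0) hlt (fun h => hs (mstart_eq_of_SB h))
    have hub := (gpsi_bounds DM (d := d) (e := e) hk0).2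
    have hlb := (gpsi_bounds DM (d := d) (e := e) hk1).1
    omega

lemma psi_BP {d e : Equiv.Perm (Fin m)} (hd3 : BP DJ d) (hMJ : DM ⊆ DJ) :
    BP DJ (psi DM d e) := by
  intro j
  rw [fv_psi_eq]
  by_cases hj : j < m
  · have h2 : SB DM (fv d j) (gpsi DM d e j) := SB_of_mstart_eq ((gpsi_blk DM hj).2).symm
    exact SB_trans (hd3 j) (SB_mono hMJ h2)
  · rw [gpsi, if_neg hj]
    exact SB_refl _ _

lemma psi_u_incM {d e : Equiv.Perm (Fin m)} (hMJ : DM ⊆ DJ) (hDJ : ∀ k ∈ DJ, k + 1 < m) :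
    IncOn DM (e * (psi DM d e)⁻¹) := by
  intro l hl
  have hl1 : l + 1 < m := hDJ l (hMJ hl)
  have hl0 : l < m := by omega
  rw [fv_mul, fv_mul]
  set j := fv (psi DM d e)⁻¹ l with hjdef
  set j2 := fv (psi DM d e)⁻¹ (l + 1) with hj2def
  have hjm : j < m := fv_lt _ hl0
  have hj2m : j2 < m := fv_lt _ hl1
  have e1 : gpsi DM d e j = l := by
    rw [← fv_psi_eq, hjdef, fv_fv_inv]
  have e2 : gpsi DM d e j2 = l + 1 := by
    rw [← fv_psi_eq, hj2def, fv_fv_inv]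
  have hs : mstart DM (fv d j) = mstart DM (fv d j2) := by
    rw [← (gpsi_blk DM hjm).2, ← (gpsi_blk DM hj2m).2, e1, e2]
    exact mstart_eq_of_SB (SB_step hl)
  show fv e j < fv e j2
  by_contra hcon
  push_neg at hcon
  have hne : j ≠ j2 := by
    intro h
    rw [h, e2] at e1
    omega
  have hlt : fv e j2 < fv e j :=
    lt_of_le_of_ne hcon (fun h => hne (fv_injective e h).symm)
  rw [gpsi, if_pos hjm] at e1
  rw [gpsi, if_pos hj2m] at e2
  rw [hs] at e1
  have hsub : insert j2 ((Finset.range m).filter fun i =>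
      mstart DM (fv d i) = mstart DM (fv d j2) ∧ fv e i < fv e j2) ⊆
      (Finset.range m).filter fun i =>
        mstart DM (fv d i) = mstart DM (fv d j2) ∧ fv e i < fv e j := by
    intro i hi
    rcases Finset.mem_insert.1 hi with rfl | hi
    · exact Finset.mem_filter.2 ⟨Finset.mem_range.2 hj2m, rfl, hlt⟩
    · rw [Finset.mem_filter] at hi ⊢
      exact ⟨hi.1, hi.2.1, by omega⟩
  have hcard := Finset.card_le_card hsub
  rw [Finset.card_insert_of_notMem (fun hh => by
    rw [Finset.mem_filter] at hh; omega)] at hcard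
  omega

lemma card_blk_below {x : ℕ} (hx : x < m) :
    ((Finset.range m).filter fun y => mstart DM y = mstart DM x ∧ y < x).card
      = x - mstart DM x := by
  have hset : ((Finset.range m).filter fun y => mstart DM y = mstart DM x ∧ y < x) =
      Finset.Ico (mstart DM x) x := by
    ext y
    simp only [Finset.mem_filter, Finset.mem_range, Finset.mem_Ico]
    constructor
    · rintro ⟨hy, he, hlt⟩
      exact ⟨he ▸ mstart_le DM y, hlt⟩
    · rintro ⟨h1, h2⟩
      refine ⟨by omega, ?_, h2⟩
      exact (mstart_eq_of_SB (SB_of_between_right (SB_mstart DM x) h1 (by omega)))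
  rw [hset, Nat.card_Ico]

lemma psi_phi {u v : Equiv.Perm (Fin m)} (hu1 : IncOn DM u) :
    psi DM (phi DM v) (u * v) = v := by
  apply perm_ext_of_fv
  intro t ht
  rw [fv_psi_eq, gpsi, if_pos ht]
  have hvt : fv v t < m := fv_lt v ht
  have hfil : ((Finset.range m).filter fun i =>
      mstart DM (fv (phi DM v) i) = mstart DM (fv (phi DM v) t) ∧
        fv (u * v) i < fv (u * v) t) =
      (Finset.range m).filter fun i =>
        mstart DM (fv v i) = mstart DM (fv v t) ∧ fv v i < fv v t := by
    ext i
    simp only [Finset.mem_filter, Finset.mem_range]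
    constructor
    · rintro ⟨him, h1, h2⟩
      have hms : mstart DM (fv v i) = mstart DM (fv v t) := by
        rw [← (gphi_blk DM him).2, ← (gphi_blk DM ht).2, ← fv_phi_eq, ← fv_phi_eq]
        exact h1
      refine ⟨him, hms, ?_⟩
      rw [fv_mul, fv_mul] at h2
      exact (IncOn_lt_iff hu1 (SB_of_mstart_eq hms)).1 h2
    · rintro ⟨him, h1, h2⟩
      have hms : mstart DM (fv (phi DM v) i) = mstart DM (fv (phi DM v) t) := by
        rw [fv_phi_eq, fv_phi_eq, (gphi_blk DM him).2, (gphi_blk DM ht).2]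
        exact h1
      refine ⟨him, hms, ?_⟩
      rw [fv_mul, fv_mul]
      exact (IncOn_lt_iff hu1 (SB_of_mstart_eq h1)).2 h2
  rw [hfil]
  have hcnt : ((Finset.range m).filter fun i =>
      mstart DM (fv v i) = mstart DM (fv v t) ∧ fv v i < fv v t).card
      = fv v t - mstart DM (fv v t) := by
    have hc := card_filter_fv v (fun y => mstart DM y = mstart DM (fv v t) ∧ y < fv v t)
    exact hc.trans (card_blk_below DM hvt)
  rw [hcnt]
  have hms : mstart DM (fv (phi DM v) t) = mstart DM (fv v t) := by
    rw [fv_phi_eq]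
    exact (gphi_blk DM ht).2
  rw [hms]
  have := mstart_le DM (fv v t)
  omega

lemma phi_psi {d e : Equiv.Perm (Fin m)} (hd2 : IncOn DM d⁻¹) :
    phi DM (psi DM d e) = d := by
  apply perm_ext_of_fv
  intro t ht
  rw [fv_phi_eq, gphi, if_pos ht]
  have hdt : fv d t < m := fv_lt d ht
  have hfil : ((Finset.range t).filter fun i =>
      mstart DM (fv (psi DM d e) i) = mstart DM (fv (psi DM d e) t)) =
      (Finset.range m).filter fun i =>
        mstart DM (fv d i) = mstart DM (fv d t) ∧ fv d i < fv d t := by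
    ext i
    simp only [Finset.mem_filter, Finset.mem_range]
    constructor
    · rintro ⟨hit, h1⟩
      have him : i < m := by omega
      have hms : mstart DM (fv d i) = mstart DM (fv d t) := by
        rw [← (gpsi_blk DM (e := e) him).2, ← (gpsi_blk DM (e := e) ht).2,
          ← fv_psi_eq, ← fv_psi_eq]
        exact h1
      refine ⟨him, hms, ?_⟩
      have hiff := IncOn_lt_iff hd2 (SB_of_mstart_eq hms)
      rw [fv_inv_fv, fv_inv_fv] at hiff
      exact hiff.1 hit
    · rintro ⟨him, h1, h2⟩
      have hiff := IncOn_lt_iff hd2 (SB_of_mstart_eq h1)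
      rw [fv_inv_fv, fv_inv_fv] at hiff
      refine ⟨hiff.2 h2, ?_⟩
      rw [fv_psi_eq, fv_psi_eq, (gpsi_blk DM him).2, (gpsi_blk DM ht).2]
      exact h1
  rw [hfil]
  have hcnt : ((Finset.range m).filter fun i =>
      mstart DM (fv d i) = mstart DM (fv d t) ∧ fv d i < fv d t).card
      = fv d t - mstart DM (fv d t) := by
    have hc := card_filter_fv d (fun y => mstart DM y = mstart DM (fv d t) ∧ y < fv d t)
    exact hc.trans (card_blk_below DM hdt)
  rw [hcnt]
  have hms : mstart DM (fv (psi DM d e) t) = mstart DM (fv d t) := by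
    rw [fv_psi_eq]
    exact (gpsi_blk DM ht).2
  rw [hms]
  have := mstart_le DM (fv d t)
  omega


/-! ### bridging to the root-system encoding -/

variable {n : ℕ}

/-- The set of positions of the simple roots in `S`. -/
def DSet (n : ℕ) (S : Finset (RootA n)) : Finset ℕ :=
  (Finset.univ.filter fun k : Fin n => ((Fin.castSucc k, Fin.succ k) : RootA n) ∈ S).image
    fun k => (k : ℕ)

lemma mem_DSet {S : Finset (RootA n)} {j : ℕ} :
    j ∈ DSet n S ↔ ∃ k : Fin n, ((Fin.castSucc k, Fin.succ k) : RootA n) ∈ S ∧ (k : ℕ) = j := by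
  simp [DSet]

lemma DSet_lt {S : Finset (RootA n)} : ∀ j ∈ DSet n S, j + 1 < n + 1 := by
  intro j hj
  rw [mem_DSet] at hj
  obtain ⟨k, _, hk⟩ := hj
  have := k.isLt
  omega

lemma fv_castSucc (w : WA n) (k : Fin n) : fv w (k : ℕ) = (w k.castSucc : ℕ) := by
  have hk : (k : ℕ) < n + 1 := by have := k.isLt; omega
  rw [fv_of_lt w hk]
  have he : (⟨(k : ℕ), hk⟩ : Fin (n + 1)) = k.castSucc := Fin.ext rfl
  rw [he]

lemma fv_succ (w : WA n) (k : Fin n) : fv w ((k : ℕ) + 1) = (w k.succ : ℕ) := by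
  have hk : (k : ℕ) + 1 < n + 1 := by have := k.isLt; omega
  rw [fv_of_lt w hk]
  have he : (⟨(k : ℕ) + 1, hk⟩ : Fin (n + 1)) = k.succ := Fin.ext rfl
  rw [he]

lemma mem_XP_iff {S : Finset (RootA n)} (hS : S ⊆ PiA n) {w : WA n} :
    w ∈ XP n S ↔ IncOn (DSet n S) w := by
  rw [XP, Finset.mem_filter]
  simp only [Finset.mem_univ, true_and]
  constructor
  · intro h j hj
    rw [mem_DSet] at hj
    obtain ⟨k, hk, rfl⟩ := hj
    have hpos := h _ hk
    rw [fv_castSucc, fv_succ]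
    exact Fin.lt_def.mp hpos
  · intro h r hr
    have hr' := hS hr
    rw [PiA, Finset.mem_image] at hr'
    obtain ⟨k, -, rfl⟩ := hr'
    have hj : (k : ℕ) ∈ DSet n S := mem_DSet.2 ⟨k, hr, rfl⟩
    have hlt := h _ hj
    rw [fv_castSucc, fv_succ] at hlt
    exact Fin.lt_def.mpr hlt

lemma mem_WP_iff {J : Finset (RootA n)} (hJ : J ⊆ PiA n) {w : WA n} :
    w ∈ WP n J ↔ BP (DSet n J) w := by
  rw [WP]
  constructor
  · intro h
    refine Subgroup.closure_induction ?_ (BP_one _) (fun x y _ _ hx hy => BP_mul hx hy)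
      (fun x _ hx => BP_inv hx) h
    rintro x ⟨p, hp, rfl⟩
    have hp' := hJ hp
    rw [PiA, Finset.mem_image] at hp'
    obtain ⟨k, -, rfl⟩ := hp'
    have hkD : (k : ℕ) ∈ DSet n J := mem_DSet.2 ⟨k, hp, rfl⟩
    have g1 : (k : ℕ) < n + 1 := by have := k.isLt; omega
    have g2 : (k : ℕ) + 1 < n + 1 := by have := k.isLt; omega
    have hsw : Equiv.swap (Fin.castSucc k) (Fin.succ k) =
        Equiv.swap (⟨(k : ℕ), g1⟩ : Fin (n + 1)) ⟨(k : ℕ) + 1, g2⟩ := by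
      have e1 : (Fin.castSucc k : Fin (n + 1)) = ⟨(k : ℕ), g1⟩ := Fin.ext rfl
      have e2 : (Fin.succ k : Fin (n + 1)) = ⟨(k : ℕ) + 1, g2⟩ := Fin.ext rfl
      rw [e1, e2]
    show BP (DSet n J) (Equiv.swap (Fin.castSucc k) (Fin.succ k))
    rw [hsw]
    intro j
    rw [fv_swap g1 g2]
    have hSB : SB (DSet n J) j (sg (k : ℕ) j) := by
      rcases sg_cases (k : ℕ) j with ⟨h, rfl⟩ | ⟨h, rfl⟩ | ⟨h, _, _⟩ <;> rw [h]
      · exact SB_step hkD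
      · exact SB_symm (SB_step hkD)
      · exact SB_refl _ _
    exact hSB
  · intro h
    refine BP_mem_closure DSet_lt ?_ _ w rfl h
    intro k hk g1 g2
    rw [mem_DSet] at hk
    obtain ⟨k', hk', hkv⟩ := hk
    refine ⟨((Fin.castSucc k', Fin.succ k') : RootA n), hk', ?_⟩
    show Equiv.swap (Fin.castSucc k') (Fin.succ k') = _
    have e1 : (Fin.castSucc k' : Fin (n + 1)) = ⟨k, g1⟩ := Fin.ext hkv
    have e2 : (Fin.succ k' : Fin (n + 1)) = ⟨k + 1, g2⟩ := by
      apply Fin.ext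
      show (k' : ℕ) + 1 = k + 1
      omega
    rw [e1, e2]

lemma mem_XPrel_iff {J S : Finset (RootA n)} (hS : S ⊆ PiA n) (hJ : J ⊆ PiA n) {w : WA n} :
    w ∈ XPrel n J S ↔ IncOn (DSet n S) w ∧ BP (DSet n J) w := by
  rw [XPrel, Finset.mem_filter, mem_XP_iff hS, mem_WP_iff hJ]

lemma DSet_inter_image {M N : Finset (RootA n)} (hM : M ⊆ PiA n)
    (d : WA n) : DSet n (M.image (act n d⁻¹) ∩ N) = PD (DSet n M) (DSet n N) d := by
  ext j
  rw [mem_DSet, PD, Finset.mem_filter]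
  constructor
  · rintro ⟨k, hk, rfl⟩
    rw [Finset.mem_inter, Finset.mem_image] at hk
    obtain ⟨⟨q, hq, hql⟩, hkN⟩ := hk
    have hq' := hM hq
    rw [PiA, Finset.mem_image] at hq'
    obtain ⟨l, -, rfl⟩ := hq'
    have e1 : d⁻¹ (Fin.castSucc l) = Fin.castSucc k := congrArg Prod.fst hql
    have e2 : d⁻¹ (Fin.succ l) = Fin.succ k := congrArg Prod.snd hql
    have f1 : (d (Fin.castSucc k) : ℕ) = (l : ℕ) := by
      rw [← e1, ← Equiv.Perm.mul_apply, mul_inv_cancel, Equiv.Perm.one_apply]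
      exact Fin.coe_castSucc l
    have f2 : (d (Fin.succ k) : ℕ) = (l : ℕ) + 1 := by
      rw [← e2, ← Equiv.Perm.mul_apply, mul_inv_cancel, Equiv.Perm.one_apply]
      exact Fin.val_succ l
    have g1 : fv d (k : ℕ) = (l : ℕ) := by rw [fv_castSucc, f1]
    have g2 : fv d ((k : ℕ) + 1) = (l : ℕ) + 1 := by rw [fv_succ, f2]
    refine ⟨mem_DSet.2 ⟨k, hkN, rfl⟩, ?_, by omega⟩
    rw [g1]
    exact mem_DSet.2 ⟨l, hq, rfl⟩
  · rintro ⟨hjN, hdM, hcons⟩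
    rw [mem_DSet] at hjN
    obtain ⟨k, hkN, rfl⟩ := hjN
    rw [mem_DSet] at hdM
    obtain ⟨l, hlM, hlv⟩ := hdM
    refine ⟨k, ?_, rfl⟩
    rw [Finset.mem_inter]
    refine ⟨Finset.mem_image.2 ⟨((Fin.castSucc l, Fin.succ l) : RootA n), hlM, ?_⟩, hkN⟩
    have f1 : d (Fin.castSucc k) = Fin.castSucc l := by
      apply Fin.ext
      rw [← fv_castSucc, Fin.coe_castSucc]
      omega
    have f2 : d (Fin.succ k) = Fin.succ l := by
      apply Fin.ext
      have hfc := fv_castSucc d k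
      rw [← fv_succ, Fin.val_succ, hcons]
      omega
    have g1 : d⁻¹ (Fin.castSucc l) = Fin.castSucc k := by
      rw [← f1, ← Equiv.Perm.mul_apply, inv_mul_cancel, Equiv.Perm.one_apply]
    have g2 : d⁻¹ (Fin.succ l) = Fin.succ k := by
      rw [← f2, ← Equiv.Perm.mul_apply, inv_mul_cancel, Equiv.Perm.one_apply]
    show (d⁻¹ (Fin.castSucc l), d⁻¹ (Fin.succ l)) = _
    rw [g1, g2]

end SolAux


/-- relative Solomon multiplication rule inside `W_J`: for `M, N ⊆ J ⊆ Π`,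
`x_M^J · x_N^J = Σ_{P ⊆ N} a^J_{MNP} · x_P^J` in `ℚ[W]`. -/
theorem relative_solomon_rule (n : ℕ) (hn : 1 ≤ n) (M N J : Finset (RootA n))
    (hM : M ⊆ J) (hN : N ⊆ J) (hJ : J ⊆ PiA n) :
    xArel n J M * xArel n J N =
      ∑ P ∈ N.powerset, (aCrel n J M N P : ℚ) • xArel n J P := by
  classical
  set DM := SolAux.DSet n M with hDM
  set DN := SolAux.DSet n N with hDN
  set DJ := SolAux.DSet n J with hDJdef
  have hM' : M ⊆ PiA n := hM.trans hJ
  have hN' : N ⊆ PiA n := hN.trans hJ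
  have hMJ : DM ⊆ DJ := by
    intro j hj
    rw [hDM, SolAux.mem_DSet] at hj
    obtain ⟨k, hk, rfl⟩ := hj
    exact SolAux.mem_DSet.2 ⟨k, hM hk, rfl⟩
  have hNJ : DN ⊆ DJ := by
    intro j hj
    rw [hDN, SolAux.mem_DSet] at hj
    obtain ⟨k, hk, rfl⟩ := hj
    exact SolAux.mem_DSet.2 ⟨k, hN hk, rfl⟩
  have hDJ' : ∀ k ∈ DJ, k + 1 < n + 1 := SolAux.DSet_lt
  set T := (XD n M N).filter (fun w => w ∈ WP n J) with hT
  -- rewrite the right-hand side as a sum over T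
  have hRHS : ∑ P ∈ N.powerset, (aCrel n J M N P : ℚ) • xArel n J P
      = ∑ d ∈ T, xArel n J (M.image (act n d⁻¹) ∩ N) := by
    have hfib := Finset.sum_fiberwise_of_maps_to
      (s := T) (t := N.powerset) (g := fun d => M.image (act n d⁻¹) ∩ N)
      (fun d _ => Finset.mem_powerset.2 Finset.inter_subset_right)
      (fun d => xArel n J (M.image (act n d⁻¹) ∩ N))
    rw [← hfib]
    apply Finset.sum_congr rfl
    intro P hP
    have hcongr : ∀ d ∈ T.filter (fun d => M.image (act n d⁻¹) ∩ N = P),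
        xArel n J (M.image (act n d⁻¹) ∩ N) = xArel n J P := by
      intro d hd
      rw [(Finset.mem_filter.1 hd).2]
    rw [Finset.sum_congr rfl hcongr, Finset.sum_const, aCrel, Nat.cast_smul_eq_nsmul, hT]
  rw [hRHS]
  -- rewrite both sides as indexed sums of basis vectors
  rw [xArel, xArel, Finset.sum_mul_sum]
  have hof : ∀ u v : WA n, (MonoidAlgebra.of ℚ (WA n)) u * (MonoidAlgebra.of ℚ (WA n)) v
      = MonoidAlgebra.of ℚ (WA n) (u * v) := fun u v => (map_mul _ _ _).symm
  simp only [hof]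
  have hRHS2 : ∑ d ∈ T, xArel n J (M.image (act n d⁻¹) ∩ N)
      = ∑ q ∈ T.sigma (fun d => XPrel n J (M.image (act n d⁻¹) ∩ N)),
          MonoidAlgebra.of ℚ (WA n) q.2 := by
    rw [Finset.sum_sigma]
    apply Finset.sum_congr rfl
    intro d _
    rw [xArel]
  rw [hRHS2, ← Finset.sum_product']
  -- the Solomon bijection
  apply Finset.sum_nbij' (i := fun p => (⟨SolAux.phi DM p.2, p.1 * p.2⟩ :
      (_ : WA n) × WA n))
    (j := fun q => (q.2 * (SolAux.psi DM q.1 q.2)⁻¹, SolAux.psi DM q.1 q.2))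
  · -- forward map lands in the sigma set
    rintro ⟨u, v⟩ hp
    rw [Finset.mem_product] at hp
    obtain ⟨hu, hv⟩ := hp
    rw [SolAux.mem_XPrel_iff hM' hJ] at hu
    rw [SolAux.mem_XPrel_iff hN' hJ] at hv
    obtain ⟨hu1, hu2⟩ := hu
    obtain ⟨hv1, hv2⟩ := hv
    rw [Finset.mem_sigma]
    constructor
    · rw [hT, Finset.mem_filter, XD, Finset.mem_filter]
      refine ⟨⟨Finset.mem_univ _, ?_, ?_⟩, ?_⟩
      · rw [SolAux.mem_XP_iff hM']
        exact SolAux.phi_incM_inv DM hMJ hDJ'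
      · rw [SolAux.mem_XP_iff hN']
        exact SolAux.phi_incN DM hv1 hNJ hDJ'
      · rw [SolAux.mem_WP_iff hJ]
        exact SolAux.phi_BP DM hv2 hMJ
    · rw [SolAux.mem_XPrel_iff (Finset.inter_subset_right.trans hN') hJ,
        SolAux.DSet_inter_image hM']
      exact ⟨SolAux.phi_P_inc DM hu1 hv1 hNJ hDJ', SolAux.BP_mul hu2 hv2⟩
  · -- backward map lands in the product set
    rintro ⟨d, e⟩ hq
    rw [Finset.mem_sigma] at hq
    obtain ⟨hd, he⟩ := hq
    rw [hT, Finset.mem_filter, XD, Finset.mem_filter] at hd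
    obtain ⟨⟨-, hdM, hdN⟩, hdJ⟩ := hd
    rw [SolAux.mem_XP_iff hM'] at hdM
    rw [SolAux.mem_XP_iff hN'] at hdN
    rw [SolAux.mem_WP_iff hJ] at hdJ
    rw [SolAux.mem_XPrel_iff (Finset.inter_subset_right.trans hN') hJ,
      SolAux.DSet_inter_image hM'] at he
    obtain ⟨he1, he2⟩ := he
    rw [Finset.mem_product]
    constructor
    · rw [SolAux.mem_XPrel_iff hM' hJ]
      exact ⟨SolAux.psi_u_incM DM hMJ hDJ',
        SolAux.BP_mul he2 (SolAux.BP_inv (SolAux.psi_BP DM hdJ hMJ))⟩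
    · rw [SolAux.mem_XPrel_iff hN' hJ]
      exact ⟨SolAux.psi_incN DM hdN hdM he1 hNJ hDJ', SolAux.psi_BP DM hdJ hMJ⟩
  · -- left inverse
    rintro ⟨u, v⟩ hp
    rw [Finset.mem_product] at hp
    obtain ⟨hu, hv⟩ := hp
    rw [SolAux.mem_XPrel_iff hM' hJ] at hu
    have hpsi : SolAux.psi DM (SolAux.phi DM v) (u * v) = v := SolAux.psi_phi DM hu.1
    simp only [hpsi]
    rw [mul_inv_cancel_right]
  · -- right inverse
    rintro ⟨d, e⟩ hq
    rw [Finset.mem_sigma] at hq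
    obtain ⟨hd, -⟩ := hq
    rw [hT, Finset.mem_filter, XD, Finset.mem_filter] at hd
    obtain ⟨⟨-, hdM, -⟩, -⟩ := hd
    rw [SolAux.mem_XP_iff hM'] at hdM
    have hphi : SolAux.phi DM (SolAux.psi DM d e) = d := SolAux.phi_psi DM hdM
    have h2 : e * (SolAux.psi DM d e)⁻¹ * SolAux.psi DM d e = e := by
      rw [inv_mul_cancel_right]
    exact Sigma.ext hphi (heq_of_eq h2)
  · -- values agree
    rintro ⟨u, v⟩ _
    rfl
end
end

section
/- The family {x_J : J ⊆ Π} is linearly independent over ℚ in the rational group algebra ℚ[W]; in particular, distinct subsets J of Π give distinct elements x_J, and {x_J : J ⊆ Π} is a basis of the descent algebra Σ(W) = Sp{x_J : J ⊆ Π}. -/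
open scoped Classical

noncomputable section

namespace DescentAux

/-- end of the block of `k`: walk right while `p` holds and we are below `n`. -/
def eB (n : ℕ) (p : ℕ → Prop) (k : ℕ) : ℕ :=
  if h : k < n ∧ p k then eB n p (k + 1) else k
termination_by n - k
decreasing_by omega

/-- start of the block of `k`. -/
def sB (p : ℕ → Prop) : ℕ → ℕ
  | 0 => 0
  | k + 1 => if p k then sB p k else k + 1

variable (n : ℕ) (p : ℕ → Prop)

lemma eB_succ {k : ℕ} (h1 : k < n) (h2 : p k) : eB n p k = eB n p (k + 1) := by
  rw [eB]; simp [h1, h2]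

lemma eB_stop {k : ℕ} (h : ¬(k < n ∧ p k)) : eB n p k = k := by
  rw [eB]; simp only [h, dite_false]

lemma sB_succ_of_p {k : ℕ} (h : p k) : sB p (k + 1) = sB p k := by
  simp [sB, h]

lemma sB_succ_of_not {k : ℕ} (h : ¬ p k) : sB p (k + 1) = k + 1 := by
  simp [sB, h]

lemma le_eB (k : ℕ) : k ≤ eB n p k := by
  suffices H : ∀ m k, n - k ≤ m → k ≤ eB n p k from H (n - k) k le_rfl
  intro m
  induction m with
  | zero =>
    intro k hm
    rw [eB_stop n p (by omega)]
  | succ m ih =>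
    intro k hm
    rw [eB]
    split
    · rename_i h
      exact le_trans (Nat.le_succ k) (ih (k+1) (by omega))
    · exact le_refl k

lemma eB_le {k : ℕ} (hk : k ≤ n) : eB n p k ≤ n := by
  suffices H : ∀ m k, n - k ≤ m → k ≤ n → eB n p k ≤ n from H (n - k) k le_rfl hk
  intro m
  induction m with
  | zero =>
    intro k hm hkn
    rw [eB_stop n p (by omega)]; exact hkn
  | succ m ih =>
    intro k hm hkn
    rw [eB]
    split
    · rename_i h
      exact ih (k+1) (by omega) (by omega)
    · exact hkn

lemma sB_le (k : ℕ) : sB p k ≤ k := by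
  induction k with
  | zero => simp [sB]
  | succ k ih =>
    by_cases h : p k
    · rw [sB_succ_of_p p h]; omega
    · rw [sB_succ_of_not p h]

/-- forward block constancy -/
lemma block_fwd (j k : ℕ) (hk : k ≤ j) (hje : j ≤ eB n p k) :
    sB p j = sB p k ∧ eB n p j = eB n p k := by
  suffices H : ∀ m k, j - k ≤ m → k ≤ j → j ≤ eB n p k →
      sB p j = sB p k ∧ eB n p j = eB n p k from H (j - k) k le_rfl hk hje
  clear hk hje
  intro m
  induction m with
  | zero =>
    intro k hm hk hje
    have : k = j := by omega
    subst this; exact ⟨rfl, rfl⟩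
  | succ m ih =>
    intro k hm hk hje
    rcases eq_or_lt_of_le hk with h | hlt
    · subst h; exact ⟨rfl, rfl⟩
    · have hne : eB n p k ≠ k := by omega
      have hcond : k < n ∧ p k := by
        by_contra h; exact hne (eB_stop n p h)
      have he : eB n p (k+1) = eB n p k := (eB_succ n p hcond.1 hcond.2).symm
      have hs : sB p (k+1) = sB p k := sB_succ_of_p p hcond.2
      have := ih (k+1) (by omega) hlt (by omega)
      exact ⟨this.1.trans hs, this.2.trans he⟩

/-- backward block constancy -/
lemma block_bwd (j k : ℕ) (hkn : k ≤ n) (hs : sB p k ≤ j) (hk : j ≤ k) :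
    sB p j = sB p k ∧ eB n p j = eB n p k := by
  suffices H : ∀ m k, k - j ≤ m → k ≤ n → sB p k ≤ j → j ≤ k →
      sB p j = sB p k ∧ eB n p j = eB n p k from H (k - j) k le_rfl hkn hs hk
  clear hkn hs hk
  intro m
  induction m with
  | zero =>
    intro k hm hkn hs hk
    have : j = k := by omega
    subst this; exact ⟨rfl, rfl⟩
  | succ m ih =>
    intro k hm hkn hs hk
    rcases eq_or_lt_of_le hk with h | hlt
    · subst h; exact ⟨rfl, rfl⟩
    · rcases k with _ | q
      · omega
      · have hpq : p q := by
          by_contra h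
          have := sB_succ_of_not p h
          omega
        have hsq : sB p (q+1) = sB p q := sB_succ_of_p p hpq
        have heq : eB n p q = eB n p (q+1) := eB_succ n p (by omega) hpq
        have := ih q (by omega) (by omega) (by omega) (by omega)
        exact ⟨this.1.trans hsq.symm, this.2.trans heq⟩

/-- full block constancy -/
lemma block_const (j k : ℕ) (hkn : k ≤ n) (hs : sB p k ≤ j) (he : j ≤ eB n p k) :
    sB p j = sB p k ∧ eB n p j = eB n p k := by
  rcases Nat.le_total j k with h | h
  · exact block_bwd n p j k hkn hs h
  · exact block_fwd n p j k h he

/-- the block-reversal map -/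
def fB (k : ℕ) : ℕ := sB p k + eB n p k - k

lemma fB_le {k : ℕ} (hk : k ≤ n) : fB n p k ≤ n := by
  have h1 := sB_le p k
  have h2 := eB_le n p hk
  unfold fB; omega

lemma fB_invol {k : ℕ} (hk : k ≤ n) : fB n p (fB n p k) = k := by
  have h1 := sB_le p k
  have h2 := le_eB n p k
  have hs : sB p k ≤ fB n p k := by unfold fB; omega
  have he : fB n p k ≤ eB n p k := by unfold fB; omega
  obtain ⟨hs', he'⟩ := block_const n p (fB n p k) k hk hs he
  show sB p (fB n p k) + eB n p (fB n p k) - fB n p k = k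
  rw [hs', he']
  unfold fB
  omega

/-- descent characterization -/
lemma fB_descent {k : ℕ} (hk : k < n) : fB n p k < fB n p (k + 1) ↔ ¬ p k := by
  by_cases h : p k
  · have he : eB n p (k+1) = eB n p k := (eB_succ n p hk h).symm
    have hs : sB p (k+1) = sB p k := sB_succ_of_p p h
    have h1 := sB_le p k
    have h2 := le_eB n p (k+1)
    simp only [h, not_true_eq_false, iff_false, not_lt]
    unfold fB
    rw [he, hs]
    omega
  · have he : eB n p k = k := eB_stop n p (by tauto)
    have hs : sB p (k+1) = k + 1 := sB_succ_of_not p h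
    have h1 := sB_le p k
    have h2 := le_eB n p (k+1)
    simp only [h, not_false_eq_true, iff_true]
    unfold fB
    rw [he, hs]
    omega

/-- the block-reversal permutation of `Fin (n+1)` -/
def permB : Equiv.Perm (Fin (n + 1)) :=
  Function.Involutive.toPerm
    (fun k => ⟨fB n p k.1, by have := fB_le n p (Nat.lt_succ_iff.mp k.2); omega⟩)
    (fun k => by
      ext
      exact fB_invol n p (Nat.lt_succ_iff.mp k.2))

lemma permB_apply (k : Fin (n + 1)) : (permB n p k).1 = fB n p k.1 := rfl

end DescentAux

namespace DescentAux

variable (n : ℕ) (T : Finset (RootA n))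

/-- the descent predicate encoding "the `i`-th simple root is NOT in `T`". -/
def pT : ℕ → Prop := fun i =>
  ¬ ∃ h : i < n, (Fin.castSucc (⟨i, h⟩ : Fin n), Fin.succ (⟨i, h⟩ : Fin n)) ∈ T

/-- a permutation whose descent set is exactly the complement of `T` in `Π`. -/
def wT : WA n := permB n (pT n T)

lemma wT_descent (i : Fin n) :
    wT n T (Fin.castSucc i) < wT n T (Fin.succ i) ↔ (Fin.castSucc i, Fin.succ i) ∈ T := by
  have h1 : (wT n T (Fin.castSucc i)).1 = fB n (pT n T) i.1 := rfl
  have h2 : (wT n T (Fin.succ i)).1 = fB n (pT n T) (i.1 + 1) := rfl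
  rw [Fin.lt_def, h1, h2, fB_descent n _ i.2]
  unfold pT
  rw [not_not]
  constructor
  · rintro ⟨h, hm⟩
    convert hm using 2
  · intro hm
    exact ⟨i.2, by convert hm using 2⟩

lemma mem_XP_wT {J : Finset (RootA n)} (hJ : J ⊆ PiA n) :
    wT n T ∈ XP n J ↔ J ⊆ T := by
  simp only [XP, Finset.mem_filter, Finset.mem_univ, true_and]
  constructor
  · intro h r hr
    obtain ⟨i, -, rfl⟩ := Finset.mem_image.mp (hJ hr)
    exact (wT_descent n T i).mp (h _ hr)
  · intro h r hr
    obtain ⟨i, -, rfl⟩ := Finset.mem_image.mp (hJ hr)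
    exact (wT_descent n T i).mpr (h hr)

lemma xA_apply (J : Finset (RootA n)) (w : WA n) :
    (xA n J).coeff w = if w ∈ XP n J then 1 else 0 := by
  rw [xA, MonoidAlgebra.coeff_sum, Finsupp.finset_sum_apply]
  simp only [MonoidAlgebra.of_apply, MonoidAlgebra.coeff_single, Finsupp.single_apply]
  rw [Finset.sum_ite_eq' (XP n J) w (fun _ => (1 : ℚ))]

end DescentAux

/-- the family `{x_J : J ⊆ Π}` is linearly independent over `ℚ` in `ℚ[W]`;
in particular distinct subsets `J ⊆ Π` give distinct elements `x_J`, so that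
`{x_J : J ⊆ Π}` is a basis of the descent algebra `Σ(W) = Sp{x_J : J ⊆ Π}`. -/
theorem xA_linearIndependent (n : ℕ) (hn : 1 ≤ n) :
    LinearIndependent ℚ (fun J : {J : Finset (RootA n) // J ⊆ PiA n} => xA n J.1) ∧
    Function.Injective (fun J : {J : Finset (RootA n) // J ⊆ PiA n} => xA n J.1) := by
  have hLI : LinearIndependent ℚ
      (fun J : {J : Finset (RootA n) // J ⊆ PiA n} => xA n J.1) := by
    rw [Fintype.linearIndependent_iff]
    intro g hg
    have H : ∀ T : Finset (RootA n),
        (∑ J : {J : Finset (RootA n) // J ⊆ PiA n}, if J.1 ⊆ T then g J else 0) = 0 := by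
      intro T
      have h0 : (∑ i : {J : Finset (RootA n) // J ⊆ PiA n},
          (g i • xA n i.1).coeff (DescentAux.wT n T)) = 0 := by
        rw [← Finsupp.finset_sum_apply, ← MonoidAlgebra.coeff_sum, hg]
        rfl
      refine (Finset.sum_congr rfl fun J _ => ?_).trans h0
      rw [MonoidAlgebra.coeff_smul_apply, DescentAux.xA_apply]
      simp only [DescentAux.mem_XP_wT n T J.2]
      by_cases h : J.1 ⊆ T <;> simp [h]
    have key : ∀ m : ℕ, ∀ K : {J : Finset (RootA n) // J ⊆ PiA n}, K.1.card < m → g K = 0 := by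
      intro m
      induction m with
      | zero => intro K h; omega
      | succ m ih =>
        intro K hK
        have hs := H K.1
        rw [Finset.sum_eq_single K (fun J _ hJK => by
            by_cases hsub : J.1 ⊆ K.1
            · have hss : J.1 ⊂ K.1 :=
                ssubset_of_subset_of_ne hsub (fun h => hJK (Subtype.ext h))
              have hc := Finset.card_lt_card hss
              simp only [hsub, if_true]
              exact ih J (by omega)
            · simp [hsub])
          (fun h => absurd (Finset.mem_univ K) h)] at hs
        simpa using hs
    intro K
    exact key (K.1.card + 1) K (by omega)
  exact ⟨hLI, hLI.injective⟩
end
end
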